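/- arXiv:1804.03081 — 5 statements merged into one kernel-verified Lean document; each statement's English description precedes it below -/
import Mathlib

section
/- Aggregate variational formulation without utilities: assume u_θ ≡ 0 for all θ and each c_t differentiable, convex and increasing. Let X̃ = { ∫_Θ x_θ dθ : x a measurable profile with x_θ ∈ X_θ a.e. } ⊆ ℝ^T be the aggregate feasible set. Then a profile x* with aggregate X* = ∫_Θ x*_θ dθ is a Wardrop equilibrium if and only if ⟨c(X*), Y − X*⟩ ≥ 0 for every Y ∈ X̃. -/
set_option linter.unusedSectionVars false
set_option linter.unusedVariables false
set_option maxHeartbeats 1000000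

open scoped RealInnerProductSpace BigOperators ENNReal
open Metric Set MeasureTheory


section Aux

variable {E : Type*} [MetricSpace E] [ProperSpace E] [MeasurableSpace E] [BorelSpace E]
  [SecondCountableTopology E] [Nonempty E]

noncomputable def selF (K : Set (ℝ × E)) (e : ℕ → E) : ℕ → ℝ → Set E
  | 0, θ => {y | (θ, y) ∈ K}
  | n+1, θ => selF K e n θ ∩
      closedBall (e (sInf {i | (selF K e n θ ∩ closedBall (e i) ((1/2:ℝ)^n)).Nonempty}))
        ((1/2:ℝ)^n)

noncomputable def selIdx (K : Set (ℝ × E)) (e : ℕ → E) (n : ℕ) (θ : ℝ) : ℕ :=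
  sInf {i | (selF K e n θ ∩ closedBall (e i) ((1/2:ℝ)^n)).Nonempty}

lemma selF_succ (K : Set (ℝ × E)) (e : ℕ → E) (n : ℕ) (θ : ℝ) :
    selF K e (n+1) θ = selF K e n θ ∩ closedBall (e (selIdx K e n θ)) ((1/2:ℝ)^n) := rfl

lemma selF_subset (K : Set (ℝ × E)) (e : ℕ → E) (n : ℕ) (θ : ℝ) :
    selF K e n θ ⊆ {y | (θ, y) ∈ K} := by
  induction n with
  | zero => exact subset_rfl
  | succ n ih => exact (inter_subset_left).trans ih

lemma selF_antitone (K : Set (ℝ × E)) (e : ℕ → E) (n : ℕ) (θ : ℝ) :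
    selF K e (n+1) θ ⊆ selF K e n θ := inter_subset_left

lemma selF_isClosed (K : Set (ℝ × E)) (hK : IsClosed K) (e : ℕ → E) (n : ℕ) (θ : ℝ) :
    IsClosed (selF K e n θ) := by
  induction n with
  | zero => exact hK.preimage (continuous_const.prodMk continuous_id)
  | succ n ih => exact ih.inter isClosed_closedBall

lemma selIdx_measurable_aux (K : Set (ℝ × E)) (e : ℕ → E) (n : ℕ)
    (hhit : ∀ C : Set E, IsCompact C → MeasurableSet {θ | (selF K e n θ ∩ C).Nonempty}) :
    Measurable (selIdx K e n) := by
  apply measurable_to_countable'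
  intro i
  set H : ℕ → Set ℝ := fun j => {θ | (selF K e n θ ∩ closedBall (e j) ((1/2:ℝ)^n)).Nonempty}
    with hH
  have hHm : ∀ j, MeasurableSet (H j) := fun j => hhit _ (isCompact_closedBall _ _)
  rcases Nat.eq_zero_or_pos i with rfl | hipos
  · have : selIdx K e n ⁻¹' {0} = H 0 ∪ ⋂ j, (H j)ᶜ := by
      ext θ
      simp only [mem_preimage, mem_singleton_iff, selIdx, Nat.sInf_eq_zero, mem_union,
        mem_iInter, mem_compl_iff]
      constructor
      · rintro (h | h)
        · exact Or.inl h
        · exact Or.inr fun j hj => by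
            have : j ∈ ({i | (selF K e n θ ∩ closedBall (e i) ((1/2:ℝ)^n)).Nonempty} : Set ℕ) :=
              hj
            rw [h] at this; exact this
      · rintro (h | h)
        · exact Or.inl h
        · refine Or.inr (eq_empty_iff_forall_notMem.2 fun j hj => h j hj)
    rw [this]
    exact (hHm 0).union (MeasurableSet.iInter fun j => (hHm j).compl)
  · have : selIdx K e n ⁻¹' {i} = H i ∩ ⋂ j, ⋂ (_ : j < i), (H j)ᶜ := by
      ext θ
      simp only [mem_preimage, mem_singleton_iff, mem_inter_iff, mem_iInter, mem_compl_iff]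
      have hdef : selIdx K e n θ =
          sInf {j | (selF K e n θ ∩ closedBall (e j) ((1/2:ℝ)^n)).Nonempty} := rfl
      rw [hdef]
      constructor
      · intro h
        have hne : ({j | (selF K e n θ ∩ closedBall (e j) ((1/2:ℝ)^n)).Nonempty} : Set ℕ).Nonempty := by
          by_contra hemp
          rw [not_nonempty_iff_eq_empty] at hemp
          rw [hemp, Nat.sInf_empty] at h
          omega
        constructor
        · have := Nat.sInf_mem hne
          rwa [h] at this
        · intro j hj
          rw [← h] at hj
          exact Nat.notMem_of_lt_sInf hj
      · rintro ⟨hi, hlt⟩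
        refine le_antisymm (Nat.sInf_le hi) ?_
        by_contra hcon
        push_neg at hcon
        have hmem := Nat.sInf_mem
          (s := {j | (selF K e n θ ∩ closedBall (e j) ((1/2:ℝ)^n)).Nonempty}) ⟨i, hi⟩
        exact hlt _ hcon hmem
    rw [this]
    exact (hHm i).inter (MeasurableSet.iInter fun j => MeasurableSet.iInter fun _ => (hHm j).compl)

lemma selF_hit_measurable (K : Set (ℝ × E)) (hK : IsCompact K) (e : ℕ → E) :
    ∀ n, ∀ C : Set E, IsCompact C → MeasurableSet {θ | (selF K e n θ ∩ C).Nonempty} := by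
  intro n
  induction n with
  | zero =>
    intro C hC
    have heq : {θ | (selF K e 0 θ ∩ C).Nonempty} = Prod.fst '' (K ∩ (univ ×ˢ C)) := by
      ext θ
      constructor
      · rintro ⟨y, hyK, hyC⟩
        exact ⟨(θ, y), ⟨hyK, ⟨trivial, hyC⟩⟩, rfl⟩
      · rintro ⟨p, ⟨hpK, _, hpC⟩, rfl⟩
        exact ⟨p.2, hpK, hpC⟩
    rw [heq]
    exact (((hK.inter_right (isClosed_univ.prod hC.isClosed)).image continuous_fst).measurableSet)
  | succ n ih =>
    intro C hC
    have hidx : Measurable (selIdx K e n) := selIdx_measurable_aux K e n ih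
    have heq : {θ | (selF K e (n+1) θ ∩ C).Nonempty} =
        ⋃ i, (selIdx K e n ⁻¹' {i} ∩
          {θ | (selF K e n θ ∩ (closedBall (e i) ((1/2:ℝ)^n) ∩ C)).Nonempty}) := by
      ext θ
      simp only [mem_iUnion, mem_inter_iff, mem_preimage, mem_singleton_iff, mem_setOf_eq]
      constructor
      · rintro ⟨y, hy⟩
        rw [selF_succ] at hy
        exact ⟨selIdx K e n θ, rfl, ⟨y, hy.1.1, hy.1.2, hy.2⟩⟩
      · rintro ⟨i, hi, y, hy1, hy2, hy3⟩
        refine ⟨y, ?_, hy3⟩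
        rw [selF_succ, hi]
        exact ⟨hy1, hy2⟩
    rw [heq]
    exact MeasurableSet.iUnion fun i =>
      (hidx (measurableSet_singleton i)).inter
        (ih _ ((isCompact_closedBall _ _).inter_right hC.isClosed))

lemma selIdx_measurable (K : Set (ℝ × E)) (hK : IsCompact K) (e : ℕ → E) (n : ℕ) :
    Measurable (selIdx K e n) :=
  selIdx_measurable_aux K e n (selF_hit_measurable K hK e n)

lemma selF_nonempty (K : Set (ℝ × E)) (e : ℕ → E) (he : DenseRange e) (n : ℕ) (θ : ℝ)
    (h : {y | (θ, y) ∈ K}.Nonempty) : (selF K e n θ).Nonempty := by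
  induction n with
  | zero => exact h
  | succ n ih =>
    obtain ⟨y, hy⟩ := ih
    obtain ⟨i, hi⟩ := he.exists_dist_lt y (pow_pos (by norm_num : (0:ℝ) < 1/2) n)
    have hmem : i ∈ {i | (selF K e n θ ∩ closedBall (e i) ((1/2:ℝ)^n)).Nonempty} :=
      ⟨y, hy, mem_closedBall.2 hi.le⟩
    have := Nat.sInf_mem ⟨i, hmem⟩
    exact this

lemma exists_measurable_selection_of_isCompact (K : Set (ℝ × E)) (hK : IsCompact K) :
    ∃ g : ℝ → E, Measurable g ∧ ∀ θ ∈ Prod.fst '' K, (θ, g θ) ∈ K := by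
  classical
  obtain ⟨e, he⟩ : ∃ e : ℕ → E, DenseRange e :=
    ⟨TopologicalSpace.denseSeq E, TopologicalSpace.denseRange_denseSeq E⟩
  set P := Prod.fst '' K with hP
  have hPm : MeasurableSet P := ((hK.image continuous_fst).measurableSet)
  have hslice : ∀ θ ∈ P, {y | (θ, y) ∈ K}.Nonempty := by
    rintro θ ⟨p, hp, rfl⟩
    exact ⟨p.2, hp⟩
  have hsliceE : ∀ θ, θ ∉ P → {y | (θ, y) ∈ K} = ∅ := by
    intro θ hθ
    rw [eq_empty_iff_forall_notMem]
    intro y hy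
    exact hθ ⟨(θ, y), hy, rfl⟩
  have hiInter : ∀ θ ∈ P, (⋂ n, selF K e n θ).Nonempty := by
    intro θ hθ
    apply IsCompact.nonempty_iInter_of_sequence_nonempty_isCompact_isClosed
      (fun n => selF K e n θ)
      (fun n => selF_antitone K e n θ)
      (fun n => selF_nonempty K e he n θ (hslice θ hθ))
    · exact IsCompact.of_isClosed_subset (hK.image continuous_snd)
        (selF_isClosed K hK.isClosed e 0 θ)
        (fun y hy => ⟨(θ, y), hy, rfl⟩)
    · exact fun n => selF_isClosed K hK.isClosed e n θ
  set Z : ℝ → E := fun θ =>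
    if h : (⋂ n, selF K e n θ).Nonempty then h.some else e 0 with hZ
  have hZmem : ∀ θ ∈ P, Z θ ∈ ⋂ n, selF K e n θ := by
    intro θ hθ
    rw [hZ]
    simp only [dif_pos (hiInter θ hθ)]
    exact (hiInter θ hθ).some_mem
  set gbar : ℕ → ℝ → E := fun n => P.piecewise (fun θ => e (selIdx K e n θ)) (fun _ => e 0)
    with hgbar
  have hgm : ∀ n, Measurable (gbar n) := fun n =>
    Measurable.piecewise hPm (measurable_from_top.comp (selIdx_measurable K hK e n))
      measurable_const
  have htendsto : ∀ θ, Filter.Tendsto (fun n => gbar n θ) Filter.atTop (nhds (Z θ)) := by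
    intro θ
    by_cases hθ : θ ∈ P
    · have hZK := hZmem θ hθ
      rw [tendsto_iff_dist_tendsto_zero]
      apply squeeze_zero (fun n => dist_nonneg)
        (g := fun n => (1/2:ℝ)^n)
      · intro n
        have h1 : Z θ ∈ selF K e (n+1) θ := mem_iInter.1 hZK (n+1)
        rw [selF_succ] at h1
        have h2 : dist (Z θ) (e (selIdx K e n θ)) ≤ (1/2:ℝ)^n := mem_closedBall.1 h1.2
        rw [hgbar]
        simp only [Set.piecewise_eq_of_mem _ _ _ hθ]
        rw [dist_comm]
        exact h2
      · exact tendsto_pow_atTop_nhds_zero_of_lt_one (by norm_num) (by norm_num)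
    · have h1 : ∀ n, gbar n θ = e 0 := fun n => Set.piecewise_eq_of_notMem _ _ _ hθ
      have h2 : Z θ = e 0 := by
        rw [hZ]
        have : ¬ (⋂ n, selF K e n θ).Nonempty := by
          intro hne
          obtain ⟨y, hy⟩ := hne
          have : y ∈ selF K e 0 θ := mem_iInter.1 hy 0
          rw [show selF K e 0 θ = {y | (θ, y) ∈ K} from rfl, hsliceE θ hθ] at this
          exact this
        simp only [dif_neg this]
      rw [h2]
      simp only [h1]
      exact tendsto_const_nhds
  have hZmeas : Measurable Z :=
    measurable_of_tendsto_metrizable' Filter.atTop hgm (tendsto_pi_nhds.2 htendsto)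
  refine ⟨Z, hZmeas, fun θ hθ => ?_⟩
  have := mem_iInter.1 (hZmem θ hθ) 0
  exact this

end Aux


lemma exists_nat_seq_invariant {P : ℕ → (ℕ → ℕ) → Prop} (h0 : P 0 (fun _ => 0))
    (hstep : ∀ m v, P m v → ∃ k, P (m+1) (Function.update v m k))
    (hdep : ∀ m (v w : ℕ → ℕ), (∀ i < m, v i = w i) → P m v → P m w) :
    ∃ b : ℕ → ℕ, ∀ m, P m b := by
  classical
  let g : ∀ _ : ℕ, {v : ℕ → ℕ // ∃ _ : Unit, P 0 v} := fun _ => ⟨fun _ => 0, ⟨(), h0⟩⟩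
  -- define the recursive sequence of approximations
  let rec' : ℕ → {vp : (ℕ → ℕ) × ℕ // True} := fun _ => ⟨⟨fun _ => 0, 0⟩, trivial⟩
  -- use Nat.rec directly
  let F : (m : ℕ) → {v : ℕ → ℕ // P m v} :=
    fun m => Nat.rec (motive := fun m => {v : ℕ → ℕ // P m v})
      ⟨fun _ => 0, h0⟩
      (fun m ih => ⟨Function.update ih.1 m (hstep m ih.1 ih.2).choose,
        (hstep m ih.1 ih.2).choose_spec⟩) m
  have hFsucc : ∀ m i, i < m → (F (m+1)).1 i = (F m).1 i := by
    intro m i hi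
    show Function.update (F m).1 m _ i = (F m).1 i
    exact Function.update_of_ne (by omega) _ _
  have hchain : ∀ i m m', i < m → m ≤ m' → (F m').1 i = (F m).1 i := by
    intro i m m' hi hmm
    induction m' with
    | zero => omega
    | succ m' ih =>
      rcases Nat.lt_or_ge m (m'+1) with h | h
      · have hm : m ≤ m' := by omega
        rw [hFsucc m' i (by omega), ih hm]
      · have : m = m' + 1 := by omega
        subst this; rfl
  refine ⟨fun i => (F (i+1)).1 i, fun m => ?_⟩
  refine hdep m (F m).1 _ (fun i hi => ?_) (F m).2
  exact hchain i (i+1) m (Nat.lt_succ_self i) hi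

section Cap

variable {E : Type*} [MetricSpace E] [ProperSpace E] [MeasurableSpace E] [BorelSpace E]
  [SecondCountableTopology E] [Nonempty E]

lemma exists_isCompact_subset_of_analyticSet (G : Set (ℝ × E)) (hG : AnalyticSet G)
    (hfin : volume (Prod.fst '' G) ≠ ⊤) (hpos : 0 < volume (Prod.fst '' G)) :
    ∃ K ⊆ G, IsCompact K ∧ 0 < volume (Prod.fst '' K) := by
  classical
  rw [AnalyticSet] at hG
  rcases hG with rfl | ⟨f, fc, frange⟩
  · simp at hpos
  set cap : Set (ℕ → ℕ) → ℝ≥0∞ := fun s => volume (Prod.fst '' (f '' s)) with hcap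
  set Sv : (ℕ → ℕ) → ℕ → Set (ℕ → ℕ) := fun v m => {ω | ∀ i < m, ω i ≤ v i} with hSv
  set δ0 : ℝ≥0∞ := cap univ with hδ0
  have hδcap : cap univ = volume (Prod.fst '' G) := by
    show volume (Prod.fst '' (f '' univ)) = volume (Prod.fst '' G)
    rw [image_univ, frange]
  have hδpos : δ0 ≠ 0 := by rw [hδ0, hδcap]; exact hpos.ne'
  have hδfin : δ0 ≠ ⊤ := by rw [hδ0, hδcap]; exact hfin
  -- invariant
  set P : ℕ → (ℕ → ℕ) → Prop := fun m v => δ0/2 + δ0/2^(m+1) ≤ cap (Sv v m) with hPdef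
  have h0 : P 0 (fun _ => 0) := by
    have hs : Sv (fun _ => 0) 0 = univ := by
      ext ω; simp [hSv]
    show δ0/2 + δ0/2^(0+1) ≤ cap (Sv (fun _ => 0) 0)
    rw [hs, pow_one, ENNReal.add_halves, ← hδ0]
  have hstep : ∀ m v, P m v → ∃ k, P (m+1) (Function.update v m k) := by
    intro m0 v hP
    have hUnion : Sv v m0 = ⋃ k, Sv (Function.update v m0 k) (m0+1) := by
      ext ω
      simp only [hSv, mem_setOf_eq, mem_iUnion]
      constructor
      · intro h
        refine ⟨ω m0, fun i hi => ?_⟩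
        rcases Nat.lt_or_ge i m0 with h' | h'
        · rw [Function.update_of_ne (by omega)]; exact h i h'
        · have : i = m0 := by omega
          subst this
          rw [Function.update_self]
      · rintro ⟨k, hk⟩ i hi
        have := hk i (by omega)
        rwa [Function.update_of_ne (by omega)] at this
    have hmono : Monotone (fun k => Sv (Function.update v m0 k) (m0+1)) := by
      intro k k' hkk
      intro ω hω
      simp only [hSv, mem_setOf_eq] at hω ⊢
      intro i hi
      rcases Nat.lt_or_ge i m0 with h' | h'
      · have := hω i hi
        rwa [Function.update_of_ne (by omega)] at this ⊢
      · have : i = m0 := by omega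
        subst this
        have h2 := hω i hi
        rw [Function.update_self] at h2 ⊢
        omega
    have hsup : cap (Sv v m0) = ⨆ k, cap (Sv (Function.update v m0 k) (m0+1)) := by
      show volume (Prod.fst '' (f '' Sv v m0)) =
        ⨆ k, volume (Prod.fst '' (f '' Sv (Function.update v m0 k) (m0+1)))
      conv_lhs => rw [hUnion, image_iUnion, image_iUnion]
      exact Directed.measure_iUnion
        (Monotone.directed_le (fun k k' h => Set.image_mono (Set.image_mono (hmono h))))
    have hlt2 : δ0/2^(m0+2) < δ0/2^(m0+1) := by
      have hx0 : (2:ℝ≥0∞)^(m0+1) ≠ 0 := pow_ne_zero _ (by norm_num)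
      have hxt : (2:ℝ≥0∞)^(m0+1) ≠ ⊤ := ENNReal.pow_ne_top (by norm_num)
      have hpow : (2:ℝ≥0∞)^(m0+1) < 2^(m0+2) := by
        calc (2:ℝ≥0∞)^(m0+1) = 2^(m0+1) * 1 := (mul_one _).symm
        _ < 2^(m0+1) * 2 := by
            rw [ENNReal.mul_lt_mul_iff_right hx0 hxt]; norm_num
        _ = 2^(m0+2) := (pow_succ 2 (m0+1)).symm
      rw [div_eq_mul_inv, div_eq_mul_inv]
      rw [ENNReal.mul_lt_mul_iff_right hδpos hδfin]
      exact ENNReal.inv_lt_inv.2 hpow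
    have hlt : δ0/2 + δ0/2^(m0+2) < cap (Sv v m0) := by
      refine lt_of_lt_of_le ?_ hP
      refine ENNReal.add_lt_add_left ?_ hlt2
      rw [div_eq_mul_inv]
      exact ENNReal.mul_ne_top hδfin (ENNReal.inv_ne_top.2 (by norm_num))
    rw [hsup] at hlt
    obtain ⟨k, hk⟩ := lt_iSup_iff.1 hlt
    exact ⟨k, hk.le⟩
  have hdep : ∀ m (v w : ℕ → ℕ), (∀ i < m, v i = w i) → P m v → P m w := by
    intro m v w hvw hP
    have : Sv v m = Sv w m := by
      ext ω
      simp only [hSv, mem_setOf_eq]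
      constructor
      · intro h i hi; rw [← hvw i hi]; exact h i hi
      · intro h i hi; rw [hvw i hi]; exact h i hi
    show δ0/2 + δ0/2^(m+1) ≤ cap (Sv w m)
    rw [← this]
    exact hP
  obtain ⟨b, hb⟩ := exists_nat_seq_invariant h0 hstep hdep
  have hb' : ∀ m, δ0/2 ≤ cap (Sv b m) := fun m => le_trans le_self_add (hb m)
  set L : Set (ℕ → ℕ) := univ.pi (fun i => Iic (b i)) with hL
  have hLc : IsCompact L := isCompact_univ_pi (fun i => (finite_Iic _).isCompact)
  set K : Set (ℝ × E) := f '' L with hKdef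
  have hKc : IsCompact K := hLc.image fc
  have hKG : K ⊆ G := by rw [← frange]; exact image_subset_range f L
  refine ⟨K, hKG, hKc, ?_⟩
  have hmain : δ0/2 ≤ volume (Prod.fst '' K) := by
    by_contra hlt
    push_neg at hlt
    have hPKm : MeasurableSet (Prod.fst '' K) := (hKc.image continuous_fst).measurableSet
    obtain ⟨U, hsub, hUopen, hUlt⟩ :=
      Set.exists_isOpen_lt_of_lt (Prod.fst '' K) _ hlt
    have hclaim : ∃ m, ∀ ω ∈ Sv b m, f ω ∈ U ×ˢ (univ : Set E) := by
      by_contra hno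
      push_neg at hno
      choose ω hω hout using hno
      set ωhat : ℕ → (ℕ → ℕ) := fun m i => min (ω m i) (b i) with hωhat
      have hωhatL : ∀ m, ωhat m ∈ L := by
        intro m
        rw [hL, mem_univ_pi]
        intro i
        exact mem_Iic.2 (min_le_right _ _)
      obtain ⟨a, haL, φ, hφ, hconv⟩ := hLc.tendsto_subseq hωhatL
      have h2 : Filter.Tendsto (fun k => ω (φ k)) Filter.atTop (nhds a) := by
        rw [tendsto_pi_nhds]
        intro i
        have h3 := tendsto_pi_nhds.1 hconv i
        apply h3.congr'
        filter_upwards [Filter.eventually_ge_atTop (i+1)] with k hk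
        have hik : i < φ k := lt_of_lt_of_le (by omega) (hφ.le_apply.trans le_rfl)
        have := hω (φ k) i hik
        rw [hωhat]
        simp only [Function.comp_apply]
        exact min_eq_left this
      have h4 : Filter.Tendsto (fun k => f (ω (φ k))) Filter.atTop (nhds (f a)) :=
        (fc.tendsto a).comp h2
      have h5 : f a ∈ U ×ˢ (univ : Set E) := by
        constructor
        · exact hsub ⟨f a, ⟨a, haL, rfl⟩, rfl⟩
        · trivial
      have h6 := h4.eventually ((hUopen.prod isOpen_univ).eventually_mem h5)
      obtain ⟨k, hk⟩ := h6.exists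
      exact hout (φ k) hk
    obtain ⟨m, hm⟩ := hclaim
    have h7 : Prod.fst '' (f '' Sv b m) ⊆ U := by
      rintro θ ⟨p, ⟨ω', hω', rfl⟩, rfl⟩
      exact (hm ω' hω').1
    have := le_trans (hb' m) (measure_mono h7)
    exact absurd (lt_of_le_of_lt this hUlt) (lt_irrefl _)
  refine lt_of_lt_of_le ?_ hmain
  exact ENNReal.div_pos hδpos (by norm_num)

end Cap

/-- Aggregate variational formulation of a Wardrop equilibrium
without utilities (`u_θ ≡ 0`). Nonatomic routing game on `Θ = [0,1]` with `T`
parallel arcs: strategy sets `X θ` nonempty convex compact, in the nonnegative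
orthant and in `B(0,M)`, measurable graph; costs `c t` differentiable
(derivative `c' t`), convex, increasing. With the aggregate feasible set
`X̃ = {∫_Θ x_θ dθ : x measurable profile, x θ ∈ X θ a.e.}`, a measurable
profile `xstar` with `xstar θ ∈ X θ` a.e. and aggregate `Xagg = ∫_Θ xstar` is
a Wardrop equilibrium iff `⟪c(Xagg), Y - Xagg⟫ ≥ 0` for all `Y ∈ X̃`. -/
theorem statement5 {T : ℕ} (hT : 1 ≤ T) (M : ℝ) (hM : 0 < M)
    (X : ℝ → Set (EuclideanSpace ℝ (Fin T)))
    (hXne : ∀ θ, (X θ).Nonempty)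
    (hXconv : ∀ θ, Convex ℝ (X θ))
    (hXcpt : ∀ θ, IsCompact (X θ))
    (hXball : ∀ θ, X θ ⊆ closedBall 0 M)
    (hXpos : ∀ θ, ∀ x ∈ X θ, ∀ t, 0 ≤ x t)
    (hXgraph : MeasurableSet {p : ℝ × EuclideanSpace ℝ (Fin T) | p.2 ∈ X p.1})
    (c c' : Fin T → ℝ → ℝ)
    (hc : ∀ t s, HasDerivAt (c t) (c' t s) s)
    (hcconv : ∀ t, ConvexOn ℝ Set.univ (c t))
    (hcmono : ∀ t, StrictMono (c t))
    (Xtilde : Set (EuclideanSpace ℝ (Fin T)))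
    (hXtilde : Xtilde = {Y | ∃ x : ℝ → EuclideanSpace ℝ (Fin T), Measurable x ∧
        (∀ᵐ θ ∂(volume.restrict (Icc (0:ℝ) 1)), x θ ∈ X θ) ∧
        Y = ∫ θ in Icc (0:ℝ) 1, x θ})
    (xstar : ℝ → EuclideanSpace ℝ (Fin T))
    (hmeas : Measurable xstar)
    (hfeas : ∀ᵐ θ ∂(volume.restrict (Icc (0:ℝ) 1)), xstar θ ∈ X θ)
    (Xagg : EuclideanSpace ℝ (Fin T))
    (hXagg : Xagg = ∫ θ in Icc (0:ℝ) 1, xstar θ) :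
    ((∀ᵐ θ ∂(volume.restrict (Icc (0:ℝ) 1)), ∀ y ∈ X θ,
        (∑ t, xstar θ t * c t (Xagg t)) ≤ (∑ t, y t * c t (Xagg t)))
      ↔
      (∀ Y ∈ Xtilde,
        0 ≤ ⟪((WithLp.equiv 2 (Fin T → ℝ)).symm fun t => c t (Xagg t)),
              Y - Xagg⟫)) := by
  classical
  set μ := volume.restrict (Icc (0:ℝ) 1) with hμ
  set a' : EuclideanSpace ℝ (Fin T) :=
    (WithLp.equiv 2 (Fin T → ℝ)).symm (fun t => c t (Xagg t)) with ha'
  have hsum : ∀ y : EuclideanSpace ℝ (Fin T),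
      (∑ t, y t * c t (Xagg t)) = ⟪a', y⟫ := by
    intro y
    rw [PiLp.inner_apply]
    refine Finset.sum_congr rfl fun t _ => ?_
    rw [ha']
    simp [RCLike.inner_apply, WithLp.equiv_symm_apply, mul_comm]
  -- integrability of profiles
  have hint : ∀ (x : ℝ → EuclideanSpace ℝ (Fin T)), Measurable x →
      (∀ᵐ θ ∂μ, x θ ∈ X θ) → Integrable x μ := by
    intro x hxm hxf
    refine ⟨hxm.aestronglyMeasurable, HasFiniteIntegral.of_bounded (C := M) ?_⟩
    filter_upwards [hxf] with θ hθ
    have := hXball θ hθ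
    simpa [dist_zero_right] using this
  -- key integral identity
  have key : ∀ (x : ℝ → EuclideanSpace ℝ (Fin T)), Measurable x →
      (∀ᵐ θ ∂μ, x θ ∈ X θ) →
      ⟪a', (∫ θ in Icc (0:ℝ) 1, x θ) - Xagg⟫
        = ∫ θ in Icc (0:ℝ) 1, (⟪a', x θ⟫ - ⟪a', xstar θ⟫) := by
    intro x hxm hxf
    have hix : Integrable x μ := hint x hxm hxf
    have hixs : Integrable xstar μ := hint xstar hmeas hfeas
    rw [inner_sub_right, hXagg]
    rw [← integral_inner hix a', ← integral_inner hixs a']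
    rw [← integral_sub (hix.const_inner a') (hixs.const_inner a')]
  constructor
  · -- Wardrop ⇒ variational inequality
    intro h Y hY
    rw [hXtilde] at hY
    obtain ⟨x, hxm, hxf, rfl⟩ := hY
    rw [key x hxm hxf]
    apply integral_nonneg_of_ae
    filter_upwards [h, hxf, hfeas] with θ hθ hx _
    have := hθ (x θ) hx
    rw [hsum (xstar θ), hsum (x θ)] at this
    simp only [Pi.zero_apply]
    linarith
  · -- variational inequality ⇒ Wardrop
    intro h
    by_contra hbad
    rw [ae_iff] at hbad
    -- the bad set is contained in a countable union
    set N : ℕ → Set ℝ := fun n =>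
      {θ | ∃ y ∈ X θ, ⟪a', y⟫ ≤ ⟪a', xstar θ⟫ - 1/(n+1)} with hN
    have hsubN : {θ | ¬ ∀ y ∈ X θ,
        (∑ t, xstar θ t * c t (Xagg t)) ≤ (∑ t, y t * c t (Xagg t))} ⊆ ⋃ n, N n := by
      intro θ hθ
      simp only [mem_setOf_eq, not_forall] at hθ
      obtain ⟨y, hyX, hlt⟩ := hθ
      push_neg at hlt
      rw [hsum (xstar θ), hsum y] at hlt
      obtain ⟨n, hn⟩ := exists_nat_one_div_lt (sub_pos.2 hlt)
      refine mem_iUnion.2 ⟨n, ⟨y, hyX, ?_⟩⟩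
      have : (1:ℝ)/(n+1) < ⟪a', xstar θ⟫ - ⟪a', y⟫ := hn
      linarith
    have hex : ∃ n, μ (N n) ≠ 0 := by
      by_contra hall
      push_neg at hall
      have : μ (⋃ n, N n) = 0 := measure_iUnion_null_iff.2 hall
      exact hbad (measure_mono_null hsubN this)
    obtain ⟨n, hn⟩ := hex
    -- the graph-type set
    set G : Set (ℝ × EuclideanSpace ℝ (Fin T)) :=
      {p | p.1 ∈ Icc (0:ℝ) 1 ∧ p.2 ∈ X p.1 ∧ ⟪a', p.2⟫ ≤ ⟪a', xstar p.1⟫ - 1/(n+1)} with hG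
    have hGm : MeasurableSet G := by
      have h1 : MeasurableSet {p : ℝ × EuclideanSpace ℝ (Fin T) | p.1 ∈ Icc (0:ℝ) 1} :=
        measurable_fst measurableSet_Icc
      have h2 : Measurable fun p : ℝ × EuclideanSpace ℝ (Fin T) => ⟪a', p.2⟫ :=
        (continuous_const.inner continuous_snd).measurable
      have h3 : Measurable fun p : ℝ × EuclideanSpace ℝ (Fin T) =>
          ⟪a', xstar p.1⟫ - 1/(n+1) := by
        refine Measurable.sub ?_ measurable_const
        exact (continuous_const.inner continuous_id).measurable.comp (hmeas.comp measurable_fst)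
      have h4 : MeasurableSet {p : ℝ × EuclideanSpace ℝ (Fin T) |
          ⟪a', p.2⟫ ≤ ⟪a', xstar p.1⟫ - 1/(n+1)} := measurableSet_le h2 h3
      have hGeq : G = ({p : ℝ × EuclideanSpace ℝ (Fin T) | p.1 ∈ Icc (0:ℝ) 1} ∩
          {p : ℝ × EuclideanSpace ℝ (Fin T) | p.2 ∈ X p.1}) ∩
          {p : ℝ × EuclideanSpace ℝ (Fin T) | ⟪a', p.2⟫ ≤ ⟪a', xstar p.1⟫ - 1/(n+1)} := by
        rw [hG]; ext p; simp only [mem_inter_iff, mem_setOf_eq, and_assoc]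
      rw [hGeq]
      exact (h1.inter hXgraph).inter h4
    have hproj : Prod.fst '' G = Icc (0:ℝ) 1 ∩ N n := by
      ext θ
      constructor
      · rintro ⟨p, hp, rfl⟩
        rw [hG] at hp
        exact ⟨hp.1, mem_setOf_eq ▸ ⟨p.2, hp.2.1, hp.2.2⟩⟩
      · rintro ⟨h1, hθN⟩
        rw [hN] at hθN
        obtain ⟨y, hy, hle⟩ := hθN
        refine ⟨(θ, y), ?_, rfl⟩
        rw [hG]
        exact ⟨h1, hy, hle⟩
    have hμN : μ (N n) = volume (Prod.fst '' G) := by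
      rw [hproj, hμ, Measure.restrict_apply' measurableSet_Icc, inter_comm]
    have hpos : 0 < volume (Prod.fst '' G) := by
      rw [← hμN]; exact pos_iff_ne_zero.2 hn
    have hfin : volume (Prod.fst '' G) ≠ ⊤ := by
      have hss : Prod.fst '' G ⊆ Icc (0:ℝ) 1 := by
        rw [hproj]; exact inter_subset_left
      exact ne_top_of_le_ne_top (isCompact_Icc.measure_lt_top).ne (measure_mono hss)
    obtain ⟨K, hKG, hKc, hKpos⟩ :=
      exists_isCompact_subset_of_analyticSet G hGm.analyticSet hfin hpos
    obtain ⟨g, hg, hsel⟩ := exists_measurable_selection_of_isCompact K hKc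
    set S := Prod.fst '' K with hS
    have hSm : MeasurableSet S := (hKc.image continuous_fst).measurableSet
    have hSsub : S ⊆ Icc (0:ℝ) 1 := by
      rintro θ ⟨p, hp, rfl⟩
      exact (hKG hp).1
    -- the improved profile
    set x : ℝ → EuclideanSpace ℝ (Fin T) := S.piecewise g xstar with hx
    have hxm : Measurable x := Measurable.piecewise hSm hg hmeas
    have hxf : ∀ᵐ θ ∂μ, x θ ∈ X θ := by
      filter_upwards [hfeas] with θ hθ
      by_cases hSθ : θ ∈ S
      · rw [hx, Set.piecewise_eq_of_mem _ _ _ hSθ]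
        exact (hKG (hsel θ hSθ)).2.1
      · rw [hx, Set.piecewise_eq_of_notMem _ _ _ hSθ]
        exact hθ
    have hY : (∫ θ in Icc (0:ℝ) 1, x θ) ∈ Xtilde := by
      rw [hXtilde]; exact ⟨x, hxm, hxf, rfl⟩
    have hVI := h _ hY
    rw [key x hxm hxf] at hVI
    -- bound the integral strictly below 0
    have hb : ∀ θ, (⟪a', x θ⟫ - ⟪a', xstar θ⟫)
        ≤ S.indicator (fun _ => -(1/(n+1) : ℝ)) θ := by
      intro θ
      by_cases hSθ : θ ∈ S
      · rw [Set.indicator_of_mem hSθ, hx, Set.piecewise_eq_of_mem _ _ _ hSθ]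
        have := (hKG (hsel θ hSθ)).2.2
        linarith
      · rw [Set.indicator_of_notMem hSθ, hx, Set.piecewise_eq_of_notMem _ _ _ hSθ]
        simp
    have hint1 : Integrable (fun θ => ⟪a', x θ⟫ - ⟪a', xstar θ⟫) μ :=
      ((hint x hxm hxf).const_inner a').sub ((hint xstar hmeas hfeas).const_inner a')
    have hint2 : Integrable (S.indicator (fun _ => -(1/(n+1) : ℝ))) μ :=
      (integrable_const _).indicator hSm
    have hle := integral_mono_ae hint1 hint2 (Filter.Eventually.of_forall hb)
    rw [integral_indicator_const _ hSm, measureReal_def] at hle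
    have hμS : μ S = volume S := by
      rw [hμ, Measure.restrict_apply' measurableSet_Icc,
        inter_eq_self_of_subset_left hSsub]
    have hμSpos : 0 < (μ S).toReal := by
      refine ENNReal.toReal_pos ?_ ?_
      · rw [hμS, hS]; exact hKpos.ne'
      · rw [hμS]; exact ((hKc.image continuous_fst).measure_lt_top).ne
    have : (μ S).toReal • (-(1/(n+1) : ℝ)) < 0 := by
      rw [smul_eq_mul]
      apply mul_neg_of_pos_of_neg hμSpos
      have : (0:ℝ) < 1/(n+1) := by positivity
      linarith
    linarith
end

section
/- Closeness of Wardrop-equilibrium strategies of similar players: assume each c_t is differentiable, convex, increasing, with B_c := max_{x∈B(0,M)} ‖(c_t(x_t))_t‖₂; assume ‖∇u_ζ‖ ≤ Γ for all ζ, and that each u_ζ is α-strongly concave on B(0,M) for a common α > 0. Let x* be a Wardrop equilibrium with aggregate X*, and let θ, ξ ∈ [0,1] be two players at which the equilibrium variational inequality ⟨c(X*) − ∇u_ζ(x*_ζ), y − x*_ζ⟩ ≥ 0 (∀ y ∈ X_ζ) holds. If d_H(X_θ, X_ξ) ≤ δ and sup_{x∈B(0,M)} ‖∇u_θ(x) −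 ∇u_ξ(x)‖₂ ≤ d, then ‖x*_θ − x*_ξ‖₂² ≤ (2/α)·(M·d + (B_c + Γ)·δ). -/
open scoped RealInnerProductSpace BigOperators
open Metric Set MeasureTheory Filter

lemma grad_firstorder {E : Type*} [NormedAddCommGroup E] [InnerProductSpace ℝ E] [CompleteSpace E]
    {s : Set E} {α : ℝ} {f : E → ℝ} (hf : StrongConcaveOn s α f)
    {a b : E} (ha : a ∈ s) (hb : b ∈ s) {ga : E}
    (hga : HasGradientAt f ga a) :
    f b + α / 2 * ‖a - b‖ ^ 2 ≤ f a + ⟪ga, b - a⟫ := by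
  set g : ℝ → ℝ := fun τ : ℝ => f (a + τ • (b - a)) with hg
  have hline : HasDerivAt g ⟪ga, b - a⟫ 0 := by
    have h1 : HasDerivAt (fun τ : ℝ => a + τ • (b - a)) (b - a) 0 := by
      simpa using ((hasDerivAt_id (0:ℝ)).smul_const (b - a)).const_add a
    have hga' : HasFDerivAt f ((InnerProductSpace.toDual ℝ E) ga) (a + (0:ℝ) • (b - a)) := by simpa using hga.hasFDerivAt
    have h2 := hga'.comp_hasDerivAt 0 h1
    exact h2
  have h2 := hline.hasDerivWithinAt (s := Set.Ioi (0:ℝ))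
  rw [hasDerivWithinAt_iff_tendsto_slope] at h2
  have hset : Set.Ioi (0:ℝ) \ {0} = Set.Ioi 0 :=
    Set.diff_singleton_eq_self (by simp)
  rw [hset] at h2
  have hRHS : Tendsto (fun τ : ℝ => (f b - f a) + (1 - τ) * (α / 2 * ‖a - b‖ ^ 2))
      (nhdsWithin 0 (Set.Ioi 0)) (nhds ((f b - f a) + α / 2 * ‖a - b‖ ^ 2)) := by
    have hc : ContinuousAt (fun τ : ℝ => (f b - f a) + (1 - τ) * (α / 2 * ‖a - b‖ ^ 2)) 0 := by
      fun_prop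
    have := hc.tendsto.mono_left (nhdsWithin_le_nhds (s := Set.Ioi (0:ℝ)))
    simpa using this
  have hev : ∀ᶠ τ in nhdsWithin (0:ℝ) (Set.Ioi 0),
      (f b - f a) + (1 - τ) * (α / 2 * ‖a - b‖ ^ 2) ≤ slope g 0 τ := by
    filter_upwards [Ioo_mem_nhdsGT_of_mem (Set.mem_Ico.2 ⟨le_refl 0, zero_lt_one⟩)] with τ hτ
    obtain ⟨hτ0, hτ1⟩ := hτ
    have hcc := hf.2 ha hb (by linarith : (0:ℝ) ≤ 1 - τ) hτ0.le (by ring)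
    have hpt : (1 - τ) • a + τ • b = a + τ • (b - a) := by module
    rw [hpt] at hcc
    have hslope : slope g 0 τ = (f (a + τ • (b - a)) - f a) / τ := by
      simp [slope, hg, inv_mul_eq_div]
    rw [hslope, le_div_iff₀ hτ0]
    simp only [smul_eq_mul] at hcc
    nlinarith [hcc]
  have := le_of_tendsto_of_tendsto hRHS h2 hev
  linarith

lemma grad_mono {E : Type*} [NormedAddCommGroup E] [InnerProductSpace ℝ E] [CompleteSpace E]
    {s : Set E} {α : ℝ} {f : E → ℝ} (hf : StrongConcaveOn s α f)
    {a b : E} (ha : a ∈ s) (hb : b ∈ s) {ga gb : E}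
    (hga : HasGradientAt f ga a) (hgb : HasGradientAt f gb b) :
    ⟪ga - gb, a - b⟫ ≤ -(α * ‖a - b‖ ^ 2) := by
  have h1 := grad_firstorder hf ha hb hga
  have h2 := grad_firstorder hf hb ha hgb
  have e1 : ⟪ga - gb, a - b⟫ = ⟪ga, a - b⟫ - ⟪gb, a - b⟫ := inner_sub_left _ _ _
  have e2 : ⟪ga, b - a⟫ = -⟪ga, a - b⟫ := by
    rw [show b - a = -(a - b) from (neg_sub a b).symm, inner_neg_right]
  have e3 : ‖b - a‖ = ‖a - b‖ := norm_sub_rev _ _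
  rw [e2] at h1
  rw [e3] at h2
  linarith

/-- Closeness of Wardrop-equilibrium strategies of similar
players. Nonatomic routing game on `Θ = [0,1]` with `T` parallel arcs:
strategy sets `X ζ` nonempty convex compact, in the nonnegative orthant and
in `B(0,M)`; costs `c t` differentiable (derivative `c' t`), convex,
increasing, with `Bc` bounding `‖(c t (x t))_t‖` on `B(0,M)`; utilities `u ζ`
differentiable (gradient `gu ζ`) with `‖∇u_ζ‖ ≤ Γ` and `α`-strongly concave
on `B(0,M)`. Let `xstar` be a Wardrop equilibrium with aggregate `Xagg`, and
`θ, ξ ∈ [0,1]` two players at which the equilibrium variational inequality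
holds. If `d_H(X θ, X ξ) ≤ δ` and `‖∇u_θ - ∇u_ξ‖ ≤ d` on `B(0,M)`, then
`‖xstar θ - xstar ξ‖² ≤ (2/α) * (M * d + (Bc + Γ) * δ)`. -/
theorem statement12 {T : ℕ} (hT : 1 ≤ T) (M Γ α Bc δ d : ℝ)
    (hM : 0 < M) (hα : 0 < α)
    (X : ℝ → Set (EuclideanSpace ℝ (Fin T)))
    (hXne : ∀ ζ, (X ζ).Nonempty)
    (hXconv : ∀ ζ, Convex ℝ (X ζ))
    (hXcpt : ∀ ζ, IsCompact (X ζ))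
    (hXball : ∀ ζ, X ζ ⊆ closedBall 0 M)
    (hXpos : ∀ ζ, ∀ x ∈ X ζ, ∀ t, 0 ≤ x t)
    (c c' : Fin T → ℝ → ℝ)
    (hc : ∀ t s, HasDerivAt (c t) (c' t s) s)
    (hcconv : ∀ t, ConvexOn ℝ Set.univ (c t))
    (hcmono : ∀ t, StrictMono (c t))
    (hBc : ∀ x : EuclideanSpace ℝ (Fin T), x ∈ closedBall 0 M →
      ‖((WithLp.equiv 2 (Fin T → ℝ)).symm fun t => c t (x t))‖ ≤ Bc)
    (u : ℝ → EuclideanSpace ℝ (Fin T) → ℝ)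
    (gu : ℝ → EuclideanSpace ℝ (Fin T) → EuclideanSpace ℝ (Fin T))
    (hu : ∀ ζ x, HasGradientAt (u ζ) (gu ζ x) x)
    (hgubd : ∀ ζ x, ‖gu ζ x‖ ≤ Γ)
    (hstrong : ∀ ζ, StrongConcaveOn (closedBall 0 M) α (u ζ))
    -- the Wardrop equilibrium profile and its aggregate
    (xstar : ℝ → EuclideanSpace ℝ (Fin T))
    (hmeas : Measurable xstar)
    (hfeas : ∀ᵐ ζ ∂(volume.restrict (Icc (0:ℝ) 1)), xstar ζ ∈ X ζ)
    (Xagg : EuclideanSpace ℝ (Fin T))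
    (hXagg : Xagg = ∫ ζ in Icc (0:ℝ) 1, xstar ζ)
    -- the two players at which the equilibrium variational inequality holds
    (θ ξ : ℝ) (hθ : θ ∈ Icc (0:ℝ) 1) (hξ : ξ ∈ Icc (0:ℝ) 1)
    (hθfeas : xstar θ ∈ X θ) (hξfeas : xstar ξ ∈ X ξ)
    (hθVI : ∀ y ∈ X θ,
      0 ≤ ⟪((WithLp.equiv 2 (Fin T → ℝ)).symm fun t => c t (Xagg t))
            - gu θ (xstar θ), y - xstar θ⟫)
    (hξVI : ∀ y ∈ X ξ,
      0 ≤ ⟪((WithLp.equiv 2 (Fin T → ℝ)).symm fun t => c t (Xagg t))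
            - gu ξ (xstar ξ), y - xstar ξ⟫)
    -- similarity of the two players
    (hXdist : hausdorffDist (X θ) (X ξ) ≤ δ)
    (hudist : ∀ x ∈ closedBall (0 : EuclideanSpace ℝ (Fin T)) M,
      ‖gu θ x - gu ξ x‖ ≤ d) :
    ‖xstar θ - xstar ξ‖ ^ 2 ≤ (2 / α) * (M * d + (Bc + Γ) * δ) := by
  classical
  set a := xstar θ with ha_def
  set b := xstar ξ with hb_def
  set w : EuclideanSpace ℝ (Fin T) :=
    ((WithLp.equiv 2 (Fin T → ℝ)).symm fun t => c t (Xagg t)) with hw_def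
  have haball : a ∈ closedBall (0 : EuclideanSpace ℝ (Fin T)) M := hXball θ hθfeas
  have hbball : b ∈ closedBall (0 : EuclideanSpace ℝ (Fin T)) M := hXball ξ hξfeas
  have hΓ0 : 0 ≤ Γ := le_trans (norm_nonneg _) (hgubd θ a)
  have hδ0 : 0 ≤ δ := le_trans hausdorffDist_nonneg hXdist
  have hd0 : 0 ≤ d := le_trans (norm_nonneg _) (hudist 0 (mem_closedBall_self hM.le))
  -- Xagg is in the ball
  have hXaggball : Xagg ∈ closedBall (0 : EuclideanSpace ℝ (Fin T)) M := by
    rw [mem_closedBall_zero_iff, hXagg]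
    haveI : IsFiniteMeasure (volume.restrict (Icc (0:ℝ) 1)) := by
      constructor
      rw [Measure.restrict_apply_univ]
      simp
    have hbd : ∀ᵐ ζ ∂(volume.restrict (Icc (0:ℝ) 1)), ‖xstar ζ‖ ≤ M := by
      filter_upwards [hfeas] with ζ hζ
      exact mem_closedBall_zero_iff.mp (hXball ζ hζ)
    have := norm_integral_le_of_norm_le_const (μ := volume.restrict (Icc (0:ℝ) 1)) hbd
    have hμ : (volume.restrict (Icc (0:ℝ) 1)).real Set.univ = 1 := by
      rw [measureReal_def, Measure.restrict_apply_univ]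
      simp
    rw [hμ, mul_one] at this
    exact this
  have hwbd : ‖w‖ ≤ Bc := hBc Xagg hXaggball
  have hBc0 : 0 ≤ Bc := le_trans (norm_nonneg _) hwbd
  have hne : EMetric.hausdorffEdist (X θ) (X ξ) ≠ ⊤ :=
    hausdorffEdist_ne_top_of_nonempty_of_bounded (hXne θ) (hXne ξ)
      (hXcpt θ).isBounded (hXcpt ξ).isBounded
  -- choose nearby points
  have hyθ : ∃ y ∈ X θ, ‖y - b‖ ≤ δ := by
    obtain ⟨y, hy, hyd⟩ := (hXcpt θ).exists_infDist_eq_dist (hXne θ) b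
    refine ⟨y, hy, ?_⟩
    have h1 : infDist b (X θ) ≤ infDist b (X ξ) + hausdorffDist (X ξ) (X θ) :=
      infDist_le_infDist_add_hausdorffDist (EMetric.hausdorffEdist_comm (α := EuclideanSpace ℝ (Fin T)) ▸ hne)
    rw [infDist_zero_of_mem hξfeas, zero_add, hausdorffDist_comm] at h1
    have : dist b y ≤ δ := hyd ▸ le_trans h1 hXdist
    rwa [← dist_eq_norm, dist_comm]
  have hyξ : ∃ y ∈ X ξ, ‖y - a‖ ≤ δ := by
    obtain ⟨y, hy, hyd⟩ := (hXcpt ξ).exists_infDist_eq_dist (hXne ξ) a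
    refine ⟨y, hy, ?_⟩
    have h1 : infDist a (X ξ) ≤ infDist a (X θ) + hausdorffDist (X θ) (X ξ) :=
      infDist_le_infDist_add_hausdorffDist hne
    rw [infDist_zero_of_mem hθfeas, zero_add] at h1
    have : dist a y ≤ δ := hyd ▸ le_trans h1 hXdist
    rwa [← dist_eq_norm, dist_comm]
  obtain ⟨yθ, hyθmem, hyθd⟩ := hyθ
  obtain ⟨yξ, hyξmem, hyξd⟩ := hyξ
  -- VI at θ
  have hnθ : ‖w - gu θ a‖ ≤ Bc + Γ :=
    le_trans (norm_sub_le _ _) (add_le_add hwbd (hgubd θ a))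
  have hnξ : ‖w - gu ξ b‖ ≤ Bc + Γ :=
    le_trans (norm_sub_le _ _) (add_le_add hwbd (hgubd ξ b))
  have hVIθ : -((Bc + Γ) * δ) ≤ ⟪w - gu θ a, b - a⟫ := by
    have h0 := hθVI yθ hyθmem
    have hsplit : ⟪w - gu θ a, yθ - a⟫ = ⟪w - gu θ a, b - a⟫ + ⟪w - gu θ a, yθ - b⟫ := by
      rw [← inner_add_right]
      congr 1
      abel
    have habs : |⟪w - gu θ a, yθ - b⟫| ≤ (Bc + Γ) * δ :=
      le_trans (abs_real_inner_le_norm _ _)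
        (mul_le_mul hnθ hyθd (norm_nonneg _) (by linarith))
    have := abs_le.mp habs
    rw [hsplit] at h0
    linarith [this.1, this.2]
  have hVIξ : -((Bc + Γ) * δ) ≤ ⟪w - gu ξ b, a - b⟫ := by
    have h0 := hξVI yξ hyξmem
    have hsplit : ⟪w - gu ξ b, yξ - b⟫ = ⟪w - gu ξ b, a - b⟫ + ⟪w - gu ξ b, yξ - a⟫ := by
      rw [← inner_add_right]
      congr 1
      abel
    have habs : |⟪w - gu ξ b, yξ - a⟫| ≤ (Bc + Γ) * δ :=
      le_trans (abs_real_inner_le_norm _ _)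
        (mul_le_mul hnξ hyξd (norm_nonneg _) (by linarith))
    have := abs_le.mp habs
    rw [hsplit] at h0
    linarith [this.1, this.2]
  -- combine the two VIs
  have hcomb : -(2 * ((Bc + Γ) * δ)) ≤ ⟪gu θ a - gu ξ b, a - b⟫ := by
    have e1 : ⟪w - gu θ a, b - a⟫ = ⟪w, b - a⟫ - ⟪gu θ a, b - a⟫ := inner_sub_left _ _ _
    have e2 : ⟪w - gu ξ b, a - b⟫ = ⟪w, a - b⟫ - ⟪gu ξ b, a - b⟫ := inner_sub_left _ _ _
    have e3 : ⟪w, b - a⟫ = -⟪w, a - b⟫ := by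
      rw [show b - a = -(a - b) from (neg_sub a b).symm, inner_neg_right]
    have e4 : ⟪gu θ a, b - a⟫ = -⟪gu θ a, a - b⟫ := by
      rw [show b - a = -(a - b) from (neg_sub a b).symm, inner_neg_right]
    have e5 : ⟪gu θ a - gu ξ b, a - b⟫ = ⟪gu θ a, a - b⟫ - ⟪gu ξ b, a - b⟫ :=
      inner_sub_left _ _ _
    rw [e1, e3, e4] at hVIθ
    rw [e2] at hVIξ
    rw [e5]
    linarith
  -- strong monotonicity
  have hmono : ⟪gu θ a - gu θ b, a - b⟫ ≤ -(α * ‖a - b‖ ^ 2) :=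
    grad_mono (hstrong θ) haball hbball (hu θ a) (hu θ b)
  -- gradient similarity
  have hsim : ⟪gu θ b - gu ξ b, a - b⟫ ≤ d * (2 * M) := by
    have h1 := real_inner_le_norm (gu θ b - gu ξ b) (a - b)
    have h2 : ‖a - b‖ ≤ 2 * M := by
      have := norm_sub_le a b
      rw [mem_closedBall_zero_iff] at haball hbball
      linarith
    calc ⟪gu θ b - gu ξ b, a - b⟫ ≤ ‖gu θ b - gu ξ b‖ * ‖a - b‖ := h1
      _ ≤ d * (2 * M) := mul_le_mul (hudist b hbball) h2 (norm_nonneg _) hd0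
  have hdecomp : ⟪gu θ a - gu ξ b, a - b⟫
      = ⟪gu θ a - gu θ b, a - b⟫ + ⟪gu θ b - gu ξ b, a - b⟫ := by
    rw [← inner_add_left]
    congr 1
    abel
  rw [hdecomp] at hcomb
  have hkey : α * ‖a - b‖ ^ 2 ≤ 2 * (M * d) + 2 * ((Bc + Γ) * δ) := by nlinarith
  rw [div_mul_eq_mul_div, le_div_iff₀ hα]
  nlinarith [hkey]
end

section
/- Continuity of the Wardrop equilibrium at continuity points of the game: assume each c_t is differentiable, convex and increasing, ‖∇u_θ‖ ≤ Γ for all θ, and each u_θ is α-strongly concave on B(0,M) for a common α > 0. Say the game is continuous at θ₀ ∈ [0,1] if for every ε > 0 there is η > 0 such that |θ₀ − θ′| ≤ η implies d_H(X_{θ₀}, X_{θ′}) ≤ ε and sup_{x ∈ B(0,M)} ‖∇u_{θ₀}(x) − ∇u_{θ′}(x)‖₂ ≤ ε. Let x* be a profile satisfying the Wardrop variational inequality ⟨c(X*) − ∇u_θ(x*_θ), y − x*_θ⟩ ≥ 0 for all y ∈ X_θ at EVERY θ ∈ [0,1], where X* = ∫_Θ x*_θ dθ. If the game is continuous at θ₀,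 then θ ↦ x*_θ is continuous at θ₀. -/
open scoped RealInnerProductSpace BigOperators
open Metric Set MeasureTheory
open Filter Topology

lemma sc_grad_ineq {E : Type*} [NormedAddCommGroup E] [InnerProductSpace ℝ E] [CompleteSpace E]
    {s : Set E} {α : ℝ} {f : E → ℝ}
    (hf : StrongConcaveOn s α f) {x y gx : E}
    (hg : HasGradientAt f gx x) (hx : x ∈ s) (hy : y ∈ s) :
    f y - f x + α / 2 * ‖x - y‖ ^ 2 ≤ ⟪gx, y - x⟫ := by
  set v := y - x with hv
  have hline : HasDerivAt (fun τ : ℝ => x + τ • v) v 0 := by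
    simpa using ((hasDerivAt_id (0:ℝ)).smul_const v).const_add x
  have hD : HasDerivAt (fun τ : ℝ => f (x + τ • v)) ⟪gx, v⟫ 0 := by
    have hfd : HasFDerivAt f ((InnerProductSpace.toDual ℝ E) gx) x := hg
    have := (show HasFDerivAt f ((InnerProductSpace.toDual ℝ E) gx) (x + (0:ℝ) • v) by simpa using hfd).comp_hasDerivAt 0 hline
    exact this
  have hslope : Tendsto (fun τ : ℝ => (f (x + τ • v) - f x) / τ) (𝓝[>] 0) (𝓝 ⟪gx, v⟫) := by
    have h1 := (hasDerivAt_iff_tendsto_slope.mp hD).mono_left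
      (nhdsWithin_mono _ (fun τ (hτ : τ ∈ Ioi (0:ℝ)) => ne_of_gt hτ))
    refine h1.congr (fun τ => ?_)
    simp [slope_def_field, div_eq_inv_mul]
  have hR : Tendsto (fun τ : ℝ => f y - f x + α/2 * (1 - τ) * ‖x - y‖^2) (𝓝[>] 0)
      (𝓝 (f y - f x + α/2 * ‖x - y‖^2)) := by
    have hc : Continuous (fun τ : ℝ => f y - f x + α/2 * (1 - τ) * ‖x - y‖^2) := by
      continuity
    have := (hc.tendsto 0).mono_left (nhdsWithin_le_nhds (s := Ioi (0:ℝ)))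
    simpa using this
  refine le_of_tendsto_of_tendsto hR hslope ?_
  filter_upwards [Ioo_mem_nhdsGT_of_mem (by norm_num : (0:ℝ) ∈ Ico (0:ℝ) 1)] with τ hτ
  have hcc := hf.2 hx hy (by linarith [hτ.2] : (0:ℝ) ≤ 1 - τ) hτ.1.le (by ring)
  have hxy : (1-τ) • x + τ • y = x + τ • v := by
    rw [hv, smul_sub, sub_smul, one_smul]; abel
  rw [hxy] at hcc
  rw [le_div_iff₀ hτ.1]
  simp only [smul_eq_mul] at hcc
  nlinarith [hcc]

lemma sc_grad_mono {E : Type*} [NormedAddCommGroup E] [InnerProductSpace ℝ E] [CompleteSpace E]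
    {s : Set E} {α : ℝ} {f : E → ℝ}
    (hf : StrongConcaveOn s α f) {x y gx gy : E}
    (hgx : HasGradientAt f gx x) (hgy : HasGradientAt f gy y)
    (hx : x ∈ s) (hy : y ∈ s) :
    α * ‖x - y‖ ^ 2 ≤ ⟪gx - gy, y - x⟫ := by
  have h1 := sc_grad_ineq hf hgx hx hy
  have h2 := sc_grad_ineq hf hgy hy hx
  have e1 : ⟪gx - gy, y - x⟫ = ⟪gx, y - x⟫ + ⟪gy, x - y⟫ := by
    rw [inner_sub_left, show x - y = -(y - x) by abel, inner_neg_right]; ring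
  have e2 : ‖y - x‖ = ‖x - y‖ := norm_sub_rev _ _
  rw [e1]
  rw [e2] at h2
  linarith

set_option maxHeartbeats 1000000


/-- Continuity of the Wardrop equilibrium at continuity points
of the game. Nonatomic routing game on `Θ = [0,1]` with `T` parallel arcs:
strategy sets `X θ` nonempty convex compact, in the nonnegative orthant and
in `B(0,M)`; costs `c t` differentiable (derivative `c' t`), convex,
increasing; utilities `u θ` differentiable (gradient `gu θ`) with
`‖∇u_θ‖ ≤ Γ` and `α`-strongly concave on `B(0,M)`. Suppose the profile
`xstar` satisfies `xstar θ ∈ X θ` and the Wardrop variational inequality at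
EVERY `θ ∈ [0,1]`, with aggregate `Xagg = ∫_Θ xstar`. If the game is
continuous at `θ₀ ∈ [0,1]` (for every `ε > 0` there is `η > 0` such that
`|θ₀ - θ'| ≤ η` implies `d_H(X θ₀, X θ') ≤ ε` and
`‖∇u_{θ₀} - ∇u_{θ'}‖ ≤ ε` on `B(0,M)`), then `θ ↦ xstar θ` is continuous
at `θ₀` (within `[0,1]`). -/
theorem statement13 {T : ℕ} (hT : 1 ≤ T) (M Γ α : ℝ) (hM : 0 < M) (hα : 0 < α)
    (X : ℝ → Set (EuclideanSpace ℝ (Fin T)))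
    (hXne : ∀ θ, (X θ).Nonempty)
    (hXconv : ∀ θ, Convex ℝ (X θ))
    (hXcpt : ∀ θ, IsCompact (X θ))
    (hXball : ∀ θ, X θ ⊆ closedBall 0 M)
    (hXpos : ∀ θ, ∀ x ∈ X θ, ∀ t, 0 ≤ x t)
    (c c' : Fin T → ℝ → ℝ)
    (hc : ∀ t s, HasDerivAt (c t) (c' t s) s)
    (hcconv : ∀ t, ConvexOn ℝ Set.univ (c t))
    (hcmono : ∀ t, StrictMono (c t))
    (u : ℝ → EuclideanSpace ℝ (Fin T) → ℝ)
    (gu : ℝ → EuclideanSpace ℝ (Fin T) → EuclideanSpace ℝ (Fin T))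
    (hu : ∀ θ x, HasGradientAt (u θ) (gu θ x) x)
    (hgubd : ∀ θ x, ‖gu θ x‖ ≤ Γ)
    (hstrong : ∀ θ, StrongConcaveOn (closedBall 0 M) α (u θ))
    (xstar : ℝ → EuclideanSpace ℝ (Fin T))
    (hmeas : Measurable xstar)
    (hfeas : ∀ θ ∈ Icc (0:ℝ) 1, xstar θ ∈ X θ)
    (Xagg : EuclideanSpace ℝ (Fin T))
    (hXagg : Xagg = ∫ θ in Icc (0:ℝ) 1, xstar θ)
    (hVI : ∀ θ ∈ Icc (0:ℝ) 1, ∀ y ∈ X θ,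
      0 ≤ ⟪((WithLp.equiv 2 (Fin T → ℝ)).symm fun t => c t (Xagg t))
            - gu θ (xstar θ), y - xstar θ⟫)
    (θ₀ : ℝ) (hθ₀ : θ₀ ∈ Icc (0:ℝ) 1)
    (hcont : ∀ ε > (0:ℝ), ∃ η > (0:ℝ), ∀ θ' ∈ Icc (0:ℝ) 1, |θ₀ - θ'| ≤ η →
      hausdorffDist (X θ₀) (X θ') ≤ ε ∧
      ∀ x ∈ closedBall (0 : EuclideanSpace ℝ (Fin T)) M,
        ‖gu θ₀ x - gu θ' x‖ ≤ ε) :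
    ContinuousWithinAt xstar (Icc (0:ℝ) 1) θ₀ := by
  have hΓ : 0 ≤ Γ := le_trans (norm_nonneg _) (hgubd θ₀ 0)
  set F : EuclideanSpace ℝ (Fin T) :=
    (WithLp.equiv 2 (Fin T → ℝ)).symm fun t => c t (Xagg t) with hF
  set K : ℝ := ‖F‖ + Γ with hK
  have hK0 : 0 ≤ K := by positivity
  set C : ℝ := 2*K + 2*M + 1 with hC
  have hC0 : 0 < C := by positivity
  rw [Metric.continuousWithinAt_iff]
  intro ε hε
  set δ : ℝ := (α * ε^2 / 2) / C with hδdef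
  have hδ0 : 0 < δ := by positivity
  have hδC : δ * C = α * ε^2 / 2 := div_mul_cancel₀ _ (ne_of_gt hC0)
  obtain ⟨η, hη0, hη⟩ := hcont δ hδ0
  refine ⟨η, hη0, ?_⟩
  intro θ hθ hdist
  obtain ⟨hH, hgcl⟩ := hη θ hθ (by
    rw [abs_sub_comm]
    exact le_of_lt (by simpa [Real.dist_eq] using hdist))
  set x := xstar θ with hx
  set x₀ := xstar θ₀ with hx₀
  have hxX := hfeas θ hθ
  have hx₀X := hfeas θ₀ hθ₀
  have hxB : x ∈ closedBall (0:EuclideanSpace ℝ (Fin T)) M := hXball θ hxX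
  have hx₀B : x₀ ∈ closedBall (0:EuclideanSpace ℝ (Fin T)) M := hXball θ₀ hx₀X
  have hxx₀ : ‖x - x₀‖ ≤ 2 * M := by
    have h1 : ‖x‖ ≤ M := mem_closedBall_zero_iff.mp hxB
    have h2 : ‖x₀‖ ≤ M := mem_closedBall_zero_iff.mp hx₀B
    calc ‖x - x₀‖ ≤ ‖x‖ + ‖x₀‖ := norm_sub_le _ _
    _ ≤ 2 * M := by linarith
  have hne : EMetric.hausdorffEdist (X θ) (X θ₀) ≠ ⊤ :=
    Metric.hausdorffEdist_ne_top_of_nonempty_of_bounded (hXne θ) (hXne θ₀)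
      (hXcpt θ).isBounded (hXcpt θ₀).isBounded
  have hne' : EMetric.hausdorffEdist (X θ₀) (X θ) ≠ ⊤ := by
    exact Metric.hausdorffEdist_ne_top_of_nonempty_of_bounded (hXne θ₀) (hXne θ)
      (hXcpt θ₀).isBounded (hXcpt θ).isBounded
  -- y₀ ∈ X θ₀ close to x
  obtain ⟨y₀, hy₀X, hy₀d⟩ := (hXcpt θ₀).exists_infDist_eq_dist (hXne θ₀) x
  have hy₀ : dist x y₀ ≤ δ := by
    rw [← hy₀d]
    calc Metric.infDist x (X θ₀) ≤ hausdorffDist (X θ) (X θ₀) :=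
          Metric.infDist_le_hausdorffDist_of_mem hxX hne
    _ = hausdorffDist (X θ₀) (X θ) := Metric.hausdorffDist_comm
    _ ≤ δ := hH
  -- y ∈ X θ close to x₀
  obtain ⟨y, hyX, hyd⟩ := (hXcpt θ).exists_infDist_eq_dist (hXne θ) x₀
  have hy : dist x₀ y ≤ δ := by
    rw [← hyd]
    calc Metric.infDist x₀ (X θ) ≤ hausdorffDist (X θ₀) (X θ) :=
          Metric.infDist_le_hausdorffDist_of_mem hx₀X hne'
    _ ≤ δ := hH
  -- VI inequalities
  have h1 : 0 ≤ ⟪F - gu θ x, y - x⟫ := hVI θ hθ y hyX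
  have h2 : 0 ≤ ⟪F - gu θ₀ x₀, y₀ - x₀⟫ := hVI θ₀ hθ₀ y₀ hy₀X
  have hnF1 : ‖F - gu θ x‖ ≤ K := le_trans (norm_sub_le _ _) (by
    have := hgubd θ x; rw [hK]; linarith)
  have hnF2 : ‖F - gu θ₀ x₀‖ ≤ K := le_trans (norm_sub_le _ _) (by
    have := hgubd θ₀ x₀; rw [hK]; linarith)
  -- inner-product error bounds
  have hb1 : -(K * δ) ≤ ⟪F - gu θ x, x₀ - y⟫ := by
    have habs : |⟪F - gu θ x, x₀ - y⟫| ≤ ‖F - gu θ x‖ * ‖x₀ - y‖ :=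
      abs_real_inner_le_norm _ _
    have hn : ‖x₀ - y‖ ≤ δ := by rwa [← dist_eq_norm]
    have : ‖F - gu θ x‖ * ‖x₀ - y‖ ≤ K * δ := by
      apply mul_le_mul hnF1 hn (norm_nonneg _) hK0
    linarith [neg_abs_le (⟪F - gu θ x, x₀ - y⟫)]
  have hb2 : -(K * δ) ≤ ⟪F - gu θ₀ x₀, x - y₀⟫ := by
    have habs : |⟪F - gu θ₀ x₀, x - y₀⟫| ≤ ‖F - gu θ₀ x₀‖ * ‖x - y₀‖ :=
      abs_real_inner_le_norm _ _
    have hn : ‖x - y₀‖ ≤ δ := by rwa [← dist_eq_norm]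
    have : ‖F - gu θ₀ x₀‖ * ‖x - y₀‖ ≤ K * δ := by
      apply mul_le_mul hnF2 hn (norm_nonneg _) hK0
    linarith [neg_abs_le (⟪F - gu θ₀ x₀, x - y₀⟫)]
  -- combine the VI inequalities
  have hsplit1 : ⟪F - gu θ x, x₀ - x⟫ = ⟪F - gu θ x, y - x⟫ + ⟪F - gu θ x, x₀ - y⟫ := by
    rw [← inner_add_right]; congr 1; abel
  have hsplit2 : ⟪F - gu θ₀ x₀, x - x₀⟫
      = ⟪F - gu θ₀ x₀, y₀ - x₀⟫ + ⟪F - gu θ₀ x₀, x - y₀⟫ := by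
    rw [← inner_add_right]; congr 1; abel
  have hA : -(K * δ) ≤ ⟪F - gu θ x, x₀ - x⟫ := by rw [hsplit1]; linarith
  have hB : -(K * δ) ≤ ⟪F - gu θ₀ x₀, x - x₀⟫ := by rw [hsplit2]; linarith
  have hsum : ⟪F - gu θ x, x₀ - x⟫ + ⟪F - gu θ₀ x₀, x - x₀⟫
      = ⟪gu θ x - gu θ₀ x₀, x - x₀⟫ := by
    simp only [inner_sub_left, inner_sub_right]
    ring
  have hsum' : -(2 * (K * δ)) ≤ ⟪gu θ x - gu θ₀ x₀, x - x₀⟫ := by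
    rw [← hsum]; linarith
  -- strong monotonicity
  have hmono : α * ‖x - x₀‖^2 ≤ ⟪gu θ₀ x - gu θ₀ x₀, x₀ - x⟫ :=
    sc_grad_mono (hstrong θ₀) (hu θ₀ x) (hu θ₀ x₀) hxB hx₀B
  -- gradient perturbation
  have hpert : ⟪gu θ₀ x - gu θ x, x₀ - x⟫ ≤ δ * (2 * M) := by
    have habs : |⟪gu θ₀ x - gu θ x, x₀ - x⟫| ≤ ‖gu θ₀ x - gu θ x‖ * ‖x₀ - x‖ :=
      abs_real_inner_le_norm _ _
    have hn : ‖gu θ₀ x - gu θ x‖ ≤ δ := hgcl x hxB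
    have hn2 : ‖x₀ - x‖ ≤ 2 * M := by rwa [norm_sub_rev]
    have : ‖gu θ₀ x - gu θ x‖ * ‖x₀ - x‖ ≤ δ * (2 * M) :=
      mul_le_mul hn hn2 (norm_nonneg _) hδ0.le
    linarith [le_abs_self (⟪gu θ₀ x - gu θ x, x₀ - x⟫)]
  have hdecomp : ⟪gu θ₀ x - gu θ₀ x₀, x₀ - x⟫
      = -⟪gu θ x - gu θ₀ x₀, x - x₀⟫ + ⟪gu θ₀ x - gu θ x, x₀ - x⟫ := by
    simp only [inner_sub_left, inner_sub_right]
    ring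
  have hkey : α * ‖x - x₀‖^2 ≤ 2 * (K * δ) + δ * (2 * M) := by
    rw [hdecomp] at hmono
    linarith
  have hsq : ‖x - x₀‖^2 < ε^2 := by
    have h3 : α * ‖x - x₀‖^2 < α * ε^2 := by
      have h4 : δ * C = α * ε^2/2 := hδC
      rw [hC] at h4
      nlinarith [hkey, hδ0]
    exact lt_of_mul_lt_mul_left h3 hα.le
  rw [dist_eq_norm]
  exact lt_of_pow_lt_pow_left₀ 2 hε.le hsq
end

section
/- Lipschitz dependence of polyhedra on the right-hand side: let A be a real K×T matrix and for b ∈ ℝ^K define Λ_b := {x ∈ ℝ^T : A·x ≤ b (componentwise)}. Let B ⊆ ℝ^K be a compact set such that Λ_b is nonempty and bounded for every b ∈ B. Then there exists a constant C₀ > 0 such that for all b, b′ ∈ B: d_H(Λ_b, Λ_{b′}) ≤ C₀·‖b − b′‖. -/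
open scoped RealInnerProductSpace BigOperators
open Metric Set

set_option linter.unusedSectionVars false

section hoffmanAux
variable {n : ℕ} {E : Type*} [NormedAddCommGroup E] [InnerProductSpace ℝ E]
  [FiniteDimensional ℝ E] (a : Fin n → E)

-- conic Caratheodory
theorem cara (J : Finset (Fin n)) (μ : Fin n → ℝ) (hμ : ∀ j, 0 ≤ μ j) :
    ∃ t ⊆ J, LinearIndependent ℝ (fun j : t => a j) ∧
      ∃ ν : Fin n → ℝ, (∀ j, 0 ≤ ν j) ∧
        ∑ j ∈ t, ν j • a j = ∑ j ∈ J, μ j • a j := by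
  classical
  induction J using Finset.strongInduction generalizing μ with
  | _ J ih =>
  by_cases hli : LinearIndependent ℝ (fun j : J => a j)
  · exact ⟨J, le_refl _, hli, μ, hμ, rfl⟩
  · rw [Fintype.not_linearIndependent_iff] at hli
    obtain ⟨g0, hg0, i0, hi0⟩ := hli
    -- make the distinguished coordinate positive
    set g : {x // x ∈ J} → ℝ := if 0 < g0 i0 then g0 else -g0 with hgdef
    have hgsum : ∑ j : J, g j • a j = 0 := by
      rw [hgdef]; split
      · exact hg0
      · simp only [Pi.neg_apply, neg_smul, Finset.sum_neg_distrib, hg0, neg_zero]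
    have hgi0 : 0 < g i0 := by
      rw [hgdef]; split
      · assumption
      · next h =>
          simp only [Pi.neg_apply]
          rcases hi0.lt_or_gt with h' | h'
          · linarith
          · exact absurd h' h
    -- extend by zero
    set gE : Fin n → ℝ := fun j => if h : j ∈ J then g ⟨j, h⟩ else 0 with hgEdef
    have hgEsum : ∑ j ∈ J, gE j • a j = 0 := by
      rw [← Finset.sum_attach J (fun j => gE j • a j), ← hgsum]
      refine Finset.sum_congr rfl fun x _ => ?_
      simp [hgEdef, x.2]
    have hSne : (J.filter (fun j => 0 < gE j)).Nonempty := by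
      refine ⟨i0, Finset.mem_filter.2 ⟨i0.2, ?_⟩⟩
      simpa [hgEdef, i0.2] using hgi0
    set S := J.filter (fun j => 0 < gE j) with hSdef
    set τ := S.inf' hSne (fun j => μ j / gE j) with hτdef
    obtain ⟨j0, hj0S, hj0⟩ := S.exists_mem_eq_inf' hSne (fun j => μ j / gE j)
    have hj0J : j0 ∈ J := (Finset.mem_filter.1 hj0S).1
    have hgEj0 : 0 < gE j0 := (Finset.mem_filter.1 hj0S).2
    have hτ0 : 0 ≤ τ := by
      rw [hτdef, hj0]; exact div_nonneg (hμ j0) hgEj0.le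
    set μ' : Fin n → ℝ := fun j => if j ∈ J then μ j - τ * gE j else 0 with hμ'def
    have hμ'0 : ∀ j, 0 ≤ μ' j := by
      intro j
      rw [hμ'def]
      by_cases hj : j ∈ J
      · simp only [hj, if_true]
        by_cases hgj : 0 < gE j
        · have : τ ≤ μ j / gE j := Finset.inf'_le _ (Finset.mem_filter.2 ⟨hj, hgj⟩)
          have := (le_div_iff₀ hgj).1 this
          linarith
        · push_neg at hgj
          nlinarith [hμ j]
      · simp [hj]
    have hμ'j0 : μ' j0 = 0 := by
      rw [hμ'def]
      simp only [hj0J, if_true, hτdef, hj0]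
      field_simp
      simp
    have hsum' : ∑ j ∈ J.erase j0, μ' j • a j = ∑ j ∈ J, μ j • a j := by
      rw [Finset.sum_erase _ (by rw [hμ'j0, zero_smul])]
      have : ∑ j ∈ J, μ' j • a j
          = ∑ j ∈ J, μ j • a j - τ • ∑ j ∈ J, gE j • a j := by
        rw [Finset.smul_sum, ← Finset.sum_sub_distrib]
        refine Finset.sum_congr rfl fun j hj => ?_
        rw [hμ'def]; simp only [hj, if_true, sub_smul, smul_smul]
      rw [this, hgEsum, smul_zero, sub_zero]
    obtain ⟨t, htsub, htli, ν, hν0, hνsum⟩ :=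
      ih (J.erase j0) (Finset.erase_ssubset hj0J) μ' hμ'0
    exact ⟨t, htsub.trans (Finset.erase_subset _ _), htli, ν, hν0,
      hνsum.trans hsum'⟩
/-- Bound and closedness for a linearly independent subfamily. -/
theorem indep_bound (t : Finset (Fin n))
    (hli : LinearIndependent ℝ (fun j : t => a j)) :
    ∃ c : ℝ, 0 ≤ c ∧
      (∀ ν : Fin n → ℝ, (∀ j, 0 ≤ ν j) →
        ∑ j ∈ t, ν j ≤ c * ‖∑ j ∈ t, ν j • a j‖) ∧
      IsClosed {v : E | ∃ ν : Fin n → ℝ, (∀ j, 0 ≤ ν j) ∧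
        v = ∑ j ∈ t, ν j • a j} := by
  classical
  set L : ({x // x ∈ t} → ℝ) →ₗ[ℝ] E :=
    Fintype.linearCombination ℝ (fun j : t => a j) with hLdef
  have hLapp : ∀ f : {x // x ∈ t} → ℝ, L f = ∑ j : t, f j • a j := fun f =>
    rfl
  have hker : LinearMap.ker L = ⊥ := by
    rw [LinearMap.ker_eq_bot']
    intro m hm
    rw [hLapp] at hm
    funext j
    exact Fintype.linearIndependent_iff.1 hli m hm j
  obtain ⟨c0, hc0pos, hanti⟩ := L.exists_antilipschitzWith hker
  refine ⟨(t.card : ℝ) * c0, by positivity, ?_, ?_⟩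
  · intro ν hν
    have key : ∀ f : {x // x ∈ t} → ℝ, ‖f‖ ≤ c0 * ‖L f‖ := by
      intro f
      have := hanti.le_mul_dist f 0
      simpa [dist_zero_right, map_zero] using this
    set f : {x // x ∈ t} → ℝ := fun j => ν j with hfdef
    have h1 : ∑ j ∈ t, ν j = ∑ j : t, f j := (Finset.sum_attach t ν).symm
    have h2 : ∑ j ∈ t, ν j • a j = L f := by
      rw [hLapp]
      exact (Finset.sum_attach t (fun j => ν j • a j)).symm
    rw [h1, h2]
    calc ∑ j : t, f j ≤ ∑ j : t, ‖f‖ := by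
          refine Finset.sum_le_sum fun j _ => ?_
          calc f j ≤ |f j| := le_abs_self _
            _ = ‖f j‖ := rfl
            _ ≤ ‖f‖ := norm_le_pi_norm f j
      _ = (t.card : ℝ) * ‖f‖ := by
          simp [Finset.sum_const, nsmul_eq_mul, Finset.card_univ]
      _ ≤ (t.card : ℝ) * (c0 * ‖L f‖) := by
          exact mul_le_mul_of_nonneg_left (key f) (by positivity)
      _ = (t.card : ℝ) * c0 * ‖L f‖ := by ring
  · have hclemb :=
      hanti.isClosedEmbedding (LinearMap.toContinuousLinearMap L).uniformContinuous
    have hQ : IsClosed {f : {x // x ∈ t} → ℝ | ∀ j, 0 ≤ f j} := by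
      have : {f : {x // x ∈ t} → ℝ | ∀ j, 0 ≤ f j}
          = ⋂ j, {f : {x // x ∈ t} → ℝ | 0 ≤ f j} := by ext f; simp [Set.mem_iInter]
      rw [this]
      exact isClosed_iInter fun j =>
        isClosed_le continuous_const (continuous_apply j)
    have him := hclemb.isClosedMap _ hQ
    convert him using 1
    ext v
    constructor
    · rintro ⟨ν, hν, rfl⟩
      refine ⟨fun j => ν j, fun j => hν j, ?_⟩
      rw [hLapp]
      exact Finset.sum_attach t (fun j => ν j • a j)
    · rintro ⟨f, hf, rfl⟩
      refine ⟨fun j => if h : j ∈ t then f ⟨j, h⟩ else 0, ?_, ?_⟩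
      · intro j
        by_cases h : j ∈ t
        · simpa [h] using hf ⟨j, h⟩
        · simp [h]
      · rw [hLapp, ← Finset.sum_attach t]
        refine Finset.sum_congr rfl fun x _ => ?_
        simp [x.2]
/-- The finitely generated cone over rows indexed by `J`. -/
def coneJ (J : Finset (Fin n)) : Set E :=
  {v : E | ∃ μ : Fin n → ℝ, (∀ j, 0 ≤ μ j) ∧ v = ∑ j ∈ J, μ j • a j}

theorem coneJ_closed (J : Finset (Fin n)) : IsClosed (coneJ a J) := by
  classical
  have heq : coneJ a J = ⋃ t ∈ {t : Finset (Fin n) |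
      t ⊆ J ∧ LinearIndependent ℝ (fun j : t => a j)},
      {v : E | ∃ ν : Fin n → ℝ, (∀ j, 0 ≤ ν j) ∧ v = ∑ j ∈ t, ν j • a j} := by
    ext v
    simp only [Set.mem_iUnion, Set.mem_setOf_eq, coneJ]
    constructor
    · rintro ⟨μ, hμ, rfl⟩
      obtain ⟨t, htJ, htli, ν, hν, hsum⟩ := cara a J μ hμ
      exact ⟨t, ⟨htJ, htli⟩, ν, hν, hsum.symm⟩
    · rintro ⟨t, ⟨htJ, -⟩, ν, hν, rfl⟩
      refine ⟨fun j => if j ∈ t then ν j else 0,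
        fun j => by by_cases h : j ∈ t <;> simp [h, hν j], ?_⟩
      rw [← Finset.sum_subset htJ (fun j _ hj => by simp [hj])]
      exact (Finset.sum_congr rfl fun j hj => by simp [hj]).symm
  rw [heq]
  exact Set.Finite.isClosed_biUnion (Set.toFinite _)
    (fun t ht => by
      obtain ⟨c, -, -, hcl⟩ := indep_bound a t ht.2
      exact hcl)

theorem coneJ_zero (J : Finset (Fin n)) : (0 : E) ∈ coneJ a J :=
  ⟨0, fun j => le_refl 0, by simp⟩

theorem coneJ_add (J : Finset (Fin n)) {v w : E} (hv : v ∈ coneJ a J)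
    (hw : w ∈ coneJ a J) : v + w ∈ coneJ a J := by
  obtain ⟨μ, hμ, rfl⟩ := hv
  obtain ⟨ρ, hρ, rfl⟩ := hw
  exact ⟨μ + ρ, fun j => add_nonneg (hμ j) (hρ j), by
    simp [add_smul, Finset.sum_add_distrib]⟩

theorem coneJ_convex (J : Finset (Fin n)) : Convex ℝ (coneJ a J) := by
  rintro v hv w hw p q hp hq hpq
  obtain ⟨μ, hμ, rfl⟩ := hv
  obtain ⟨ρ, hρ, rfl⟩ := hw
  refine ⟨fun j => p * μ j + q * ρ j,
    fun j => add_nonneg (mul_nonneg hp (hμ j)) (mul_nonneg hq (hρ j)), ?_⟩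
  rw [Finset.smul_sum, Finset.smul_sum, ← Finset.sum_add_distrib]
  refine Finset.sum_congr rfl fun j hj => ?_
  simp [add_smul, smul_smul]

theorem coneJ_mem (J : Finset (Fin n)) {j : Fin n} (hj : j ∈ J) :
    a j ∈ coneJ a J := by
  classical
  refine ⟨fun i => if i = j then 1 else 0, fun i => by by_cases h : i = j <;> simp [h], ?_⟩
  rw [Finset.sum_eq_single_of_mem j hj (fun i _ hne => by simp [hne])]
  simp

/-- Farkas lemma via projection. -/
theorem farkas (J : Finset (Fin n)) (v : E)
    (hv : ∀ d : E, (∀ j ∈ J, ⟪a j, d⟫ ≤ 0) → ⟪v, d⟫ ≤ 0) :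
    v ∈ coneJ a J := by
  obtain ⟨p, hpmem, hpnorm⟩ := exists_norm_eq_iInf_of_complete_convex
    ⟨0, coneJ_zero a J⟩ ((coneJ_closed a J).isComplete) (coneJ_convex a J) v
  have hproj : ∀ w ∈ coneJ a J, ⟪v - p, w - p⟫ ≤ 0 :=
    (norm_eq_iInf_iff_real_inner_le_zero (coneJ_convex a J) hpmem).1 hpnorm
  set d := v - p with hd
  have hdp : ⟪d, p⟫ = 0 := by
    have h0 := hproj 0 (coneJ_zero a J)
    have h2 := hproj (p + p) (coneJ_add a J hpmem hpmem)
    simp only [zero_sub, inner_neg_right, add_sub_cancel_right] at h0 h2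
    linarith
  have hda : ∀ j ∈ J, ⟪a j, d⟫ ≤ 0 := by
    intro j hj
    have := hproj (p + a j) (coneJ_add a J hpmem (coneJ_mem a J hj))
    simpa [add_sub_cancel_left, real_inner_comm] using this
  have hvd : ⟪v, d⟫ ≤ 0 := hv d hda
  have hdd : ⟪d, d⟫ ≤ 0 := by
    have : ⟪d, d⟫ = ⟪v, d⟫ - ⟪p, d⟫ := by
      rw [hd, inner_sub_left]
    have h2 : ⟪p, d⟫ = 0 := by rw [← real_inner_comm p d]; exact hdp
    rw [this, h2]
    linarith
  have hd0 : d = 0 := by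
    have := real_inner_self_nonneg (x := d)
    have : ⟪d, d⟫ = 0 := le_antisymm hdd this
    exact inner_self_eq_zero.1 this
  have : v = p := by rwa [sub_eq_zero] at hd0
  rw [this]; exact hpmem
/-- Hoffman-type Lipschitz bound. -/
theorem hoffman : ∃ C : ℝ, 0 < C ∧ ∀ (b b' : Fin n → ℝ) (x : E),
    {z : E | ∀ j, ⟪a j, z⟫ ≤ b j}.Nonempty → (∀ j, ⟪a j, x⟫ ≤ b' j) →
    ∀ δ : ℝ, 0 ≤ δ → (∀ j, b' j - b j ≤ δ) →
    ∃ y : E, (∀ j, ⟪a j, y⟫ ≤ b j) ∧ ‖x - y‖ ≤ C * δ := by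
  classical
  have hc : ∀ t : Finset (Fin n), ∃ c, 0 ≤ c ∧
      (LinearIndependent ℝ (fun j : t => a j) →
        ∀ ν : Fin n → ℝ, (∀ j, 0 ≤ ν j) →
          ∑ j ∈ t, ν j ≤ c * ‖∑ j ∈ t, ν j • a j‖) := by
    intro t
    by_cases h : LinearIndependent ℝ (fun j : t => a j)
    · obtain ⟨c, hc0, hb, -⟩ := indep_bound a t h
      exact ⟨c, hc0, fun _ => hb⟩
    · exact ⟨0, le_refl 0, fun h' => absurd h' h⟩
  choose c hc0 hcb using hc
  have hsum0 : 0 ≤ ∑ t : Finset (Fin n), c t :=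
    Finset.sum_nonneg fun t _ => hc0 t
  set C : ℝ := 1 + ∑ t : Finset (Fin n), c t with hCdef
  have hCpos : 0 < C := by linarith
  have hcleC : ∀ t : Finset (Fin n), c t ≤ C := by
    intro t
    have := Finset.single_le_sum (f := c) (fun t _ => hc0 t) (Finset.mem_univ t)
    linarith
  refine ⟨C, hCpos, ?_⟩
  intro b b' x hne hx δ hδ0 hδ
  set Λb := {z : E | ∀ j, ⟪a j, z⟫ ≤ b j} with hΛdef
  have hinner_cont : ∀ j : Fin n, Continuous fun z : E => ⟪a j, z⟫ :=
    fun j => continuous_const.inner continuous_id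
  have hclosed : IsClosed Λb := by
    have : Λb = ⋂ j, {z : E | ⟪a j, z⟫ ≤ b j} := by
      ext z; simp [hΛdef, Set.mem_iInter]
    rw [this]
    exact isClosed_iInter fun j => isClosed_le (hinner_cont j) continuous_const
  have hconv : Convex ℝ Λb := by
    have : Λb = ⋂ j, {z : E | ⟪a j, z⟫ ≤ b j} := by
      ext z; simp [hΛdef, Set.mem_iInter]
    rw [this]
    refine convex_iInter fun j => convex_halfSpace_le ?_ _
    exact ⟨fun u w => inner_add_right _ _ _, fun r u => real_inner_smul_right _ _ _⟩
  obtain ⟨y, hymem, hynorm⟩ :=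
    exists_norm_eq_iInf_of_complete_convex hne hclosed.isComplete hconv x
  have hproj := (norm_eq_iInf_iff_real_inner_le_zero hconv hymem).1 hynorm
  have hyfeas : ∀ j, ⟪a j, y⟫ ≤ b j := hymem
  set J := Finset.univ.filter (fun j : Fin n => ⟪a j, y⟫ = b j) with hJdef
  -- normal cone property
  have hnc : ∀ d : E, (∀ j ∈ J, ⟪a j, d⟫ ≤ 0) → ⟪x - y, d⟫ ≤ 0 := by
    intro d hd
    set S := insert (1:ℝ)
      ((Finset.univ.filter (fun j : Fin n => j ∉ J ∧ 0 < ⟪a j, d⟫)).image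
        (fun j => (b j - ⟪a j, y⟫) / ⟪a j, d⟫)) with hSdef
    have hSne : S.Nonempty := ⟨1, Finset.mem_insert_self _ _⟩
    set ε := S.min' hSne with hεdef
    have hmem_pos : ∀ s ∈ S, 0 < s := by
      intro s hs
      rcases Finset.mem_insert.1 hs with rfl | hs
      · norm_num
      · obtain ⟨j, hj, rfl⟩ := Finset.mem_image.1 hs
        obtain ⟨hjJ, hjd⟩ := (Finset.mem_filter.1 hj).2
        have hlt : ⟪a j, y⟫ < b j := by
          refine lt_of_le_of_ne (hyfeas j) fun h => hjJ ?_
          exact Finset.mem_filter.2 ⟨Finset.mem_univ _, h⟩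
        exact div_pos (by linarith) hjd
    have hε0 : 0 < ε := hmem_pos _ (S.min'_mem hSne)
    have hfeas : (y + ε • d) ∈ Λb := by
      intro j
      rw [inner_add_right, real_inner_smul_right]
      by_cases hjJ : j ∈ J
      · have hb : ⟪a j, y⟫ = b j := (Finset.mem_filter.1 hjJ).2
        have h1 := hd j hjJ
        nlinarith
      · by_cases hjd : 0 < ⟪a j, d⟫
        · have hmem : (b j - ⟪a j, y⟫) / ⟪a j, d⟫ ∈ S := by
            refine Finset.mem_insert_of_mem (Finset.mem_image.2 ⟨j, ?_, rfl⟩)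
            exact Finset.mem_filter.2 ⟨Finset.mem_univ _, hjJ, hjd⟩
          have h1 : ε ≤ (b j - ⟪a j, y⟫) / ⟪a j, d⟫ := S.min'_le _ hmem
          have h2 := (le_div_iff₀ hjd).1 h1
          linarith
        · push_neg at hjd
          have h1 : ε * ⟪a j, d⟫ ≤ 0 := mul_nonpos_of_nonneg_of_nonpos hε0.le hjd
          have := hyfeas j
          linarith
    have h1 := hproj _ hfeas
    rw [add_sub_cancel_left, real_inner_smul_right] at h1
    nlinarith
  -- Farkas
  obtain ⟨μ, hμ, hveq⟩ := farkas a J (x - y) hnc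
  obtain ⟨t, htJ, htli, ν, hν, hsum⟩ := cara a J μ hμ
  have hvrep : x - y = ∑ j ∈ t, ν j • a j := by rw [hveq, ← hsum]
  -- inner product estimate
  have hinner_est : ⟪x - y, x - y⟫ ≤ (∑ j ∈ t, ν j) * δ := by
    calc ⟪x - y, x - y⟫ = ∑ j ∈ t, ν j * ⟪a j, x - y⟫ := by
          nth_rewrite 1 [hvrep]
          rw [sum_inner]
          exact Finset.sum_congr rfl fun j _ => real_inner_smul_left _ _ _
      _ ≤ ∑ j ∈ t, ν j * δ := by
          refine Finset.sum_le_sum fun j hj => ?_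
          refine mul_le_mul_of_nonneg_left ?_ (hν j)
          have hjJ : j ∈ J := htJ hj
          have hactive : ⟪a j, y⟫ = b j := (Finset.mem_filter.1 hjJ).2
          have : ⟪a j, x - y⟫ = ⟪a j, x⟫ - ⟪a j, y⟫ := inner_sub_right _ _ _
          rw [this, hactive]
          have := hx j
          have := hδ j
          linarith
      _ = (∑ j ∈ t, ν j) * δ := by rw [Finset.sum_mul]
  have hl1 : ∑ j ∈ t, ν j ≤ c t * ‖x - y‖ := by
    have := hcb t htli ν hν
    rwa [← hvrep] at this
  have hnn : ⟪x - y, x - y⟫ = ‖x - y‖ * ‖x - y‖ := real_inner_self_eq_norm_mul_norm _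
  refine ⟨y, hyfeas, ?_⟩
  by_cases hv0 : ‖x - y‖ = 0
  · rw [hv0]; positivity
  · have hvpos : 0 < ‖x - y‖ := lt_of_le_of_ne (norm_nonneg _) (Ne.symm hv0)
    have : ‖x - y‖ * ‖x - y‖ ≤ (c t * δ) * ‖x - y‖ := by
      rw [← hnn]
      calc ⟪x - y, x - y⟫ ≤ (∑ j ∈ t, ν j) * δ := hinner_est
        _ ≤ (c t * ‖x - y‖) * δ := mul_le_mul_of_nonneg_right hl1 hδ0
        _ = (c t * δ) * ‖x - y‖ := by ring
    have h2 : ‖x - y‖ ≤ c t * δ := le_of_mul_le_mul_right (by linarith) hvpos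
    calc ‖x - y‖ ≤ c t * δ := h2
      _ ≤ C * δ := mul_le_mul_of_nonneg_right (hcleC t) hδ0
end hoffmanAux

/-- Lipschitz dependence of polyhedra on the right-hand side.
Let `A` be a real `K × T` matrix and, for `b : ℝ^K`, let
`Λ b = {x : ℝ^T | A x ≤ b componentwise}`. If `B ⊆ ℝ^K` is compact and `Λ b`
is nonempty and bounded for every `b ∈ B`, then there is `C₀ > 0` such that
`d_H(Λ b, Λ b') ≤ C₀ * ‖b - b'‖` for all `b, b' ∈ B`. -/
theorem statement16 {K T : ℕ} (A : Matrix (Fin K) (Fin T) ℝ)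
    (Λ : EuclideanSpace ℝ (Fin K) → Set (EuclideanSpace ℝ (Fin T)))
    (hΛ : ∀ b, Λ b = {x | ∀ j, (∑ t, A j t * x t) ≤ b j})
    (B : Set (EuclideanSpace ℝ (Fin K))) (hBcpt : IsCompact B)
    (hne : ∀ b ∈ B, (Λ b).Nonempty)
    (hbdd : ∀ b ∈ B, Bornology.IsBounded (Λ b)) :
    ∃ C₀ > (0:ℝ), ∀ b ∈ B, ∀ b' ∈ B,
      hausdorffDist (Λ b) (Λ b') ≤ C₀ * ‖b - b'‖ := by
  classical
  set a : Fin K → EuclideanSpace ℝ (Fin T) := fun j => WithLp.toLp 2 (fun i => A j i) with hadef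
  have hinner : ∀ (j : Fin K) (x : EuclideanSpace ℝ (Fin T)),
      ⟪a j, x⟫ = ∑ i, A j i * x i := by
    intro j x
    simp [hadef, PiLp.inner_apply, RCLike.inner_apply, conj_trivial, mul_comm]
  have hΛ' : ∀ b, Λ b = {x | ∀ j, ⟪a j, x⟫ ≤ b j} := by
    intro b; rw [hΛ b]; ext x; simp only [mem_setOf_eq, hinner]
  obtain ⟨C, hCpos, hC⟩ := hoffman a
  refine ⟨C, hCpos, ?_⟩
  intro b hb b' hb'
  have hcoord : ∀ (u : EuclideanSpace ℝ (Fin K)) (j : Fin K), u j ≤ ‖u‖ := by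
    intro u j
    have h1 : ⟪EuclideanSpace.single j (1:ℝ), u⟫ = u j := by
      simp [EuclideanSpace.inner_single_left]
    calc u j = ⟪EuclideanSpace.single j (1:ℝ), u⟫ := h1.symm
      _ ≤ ‖EuclideanSpace.single j (1:ℝ)‖ * ‖u‖ := real_inner_le_norm _ _
      _ = ‖u‖ := by simp [EuclideanSpace.norm_single]
  set δ := ‖b - b'‖ with hδdef
  have hδ0 : 0 ≤ δ := norm_nonneg _
  have dir : ∀ (p q : EuclideanSpace ℝ (Fin K)), p ∈ B → (∀ j, q j - p j ≤ δ) →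
      ∀ x ∈ Λ q, ∃ y ∈ Λ p, dist x y ≤ C * δ := by
    intro p q hp hqp x hx
    rw [hΛ' q] at hx
    have hnep : {z : EuclideanSpace ℝ (Fin T) | ∀ j, ⟪a j, z⟫ ≤ p j}.Nonempty := by
      rw [← hΛ' p]; exact hne p hp
    obtain ⟨y, hy, hxy⟩ := hC (fun j => p j) (fun j => q j) x hnep hx δ hδ0 hqp
    exact ⟨y, by rw [hΛ' p]; exact hy, by rwa [dist_eq_norm]⟩
  refine hausdorffDist_le_of_mem_dist (by positivity) ?_ ?_
  · intro x hx
    refine dir b' b hb' (fun j => ?_) x hx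
    have h1 : (b - b') j ≤ ‖b - b'‖ := hcoord (b - b') j
    simpa [hδdef] using h1
  · intro x hx
    refine dir b b' hb (fun j => ?_) x hx
    have h1 : (b' - b) j ≤ ‖b' - b‖ := hcoord (b' - b) j
    rw [norm_sub_rev] at h1
    simpa [hδdef] using h1
end

section
/- Meshgrid approximation of polyhedral feasibility sets: let A be a real K×T matrix, B ⊆ ℝ^K a convex compact set such that Λ_b := {x ∈ ℝ^T : A·x ≤ b} is nonempty and bounded for every b ∈ B, and let C₀ > 0 be such that d_H(Λ_b, Λ_{b′}) ≤ C₀·‖b − b′‖ for all b, b′ ∈ B. Let b : [0,1] → B be measurable, let S ⊆ [0,1] be measurable with μ := Leb(S) > 0, and suppose ‖b_θ − b_{θ′}‖ ≤ ε for all θ, θ′ ∈ S. Define X_S := {x ∈ ℝ^T : A·x ≤ ∫_S b_θ dθ}. Then (1/μ)·X_S = Λ_{(1/μ)∫_S b_θ dθ}, and for every θ′ ∈ S: d_H(Λ_{b_{θ′}}, (1/μ)·X_S) ≤ C₀·ε. -/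
open scoped RealInnerProductSpace BigOperators Pointwise
open Metric Set MeasureTheory

/-- Meshgrid approximation of polyhedral feasibility sets.
Let `A` be a real `K × T` matrix, `Λ b = {x : ℝ^T | A x ≤ b}`, `B ⊆ ℝ^K`
convex compact with `Λ b` nonempty and bounded for every `b ∈ B`, and
`C₀ > 0` such that `d_H(Λ b, Λ b') ≤ C₀ ‖b - b'‖` on `B`. Let `b : [0,1] → B`
be measurable, `S ⊆ [0,1]` measurable with measure `μ > 0`, and
`‖b θ - b θ'‖ ≤ ε` for all `θ, θ' ∈ S`. With
`X_S := {x | A x ≤ ∫_S b θ dθ} = Λ (∫_S b)`, we have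
`(1/μ) • X_S = Λ ((1/μ) • ∫_S b)` and, for every `θ' ∈ S`,
`d_H(Λ (b θ'), (1/μ) • X_S) ≤ C₀ * ε`. -/
theorem statement18 {K T : ℕ} (A : Matrix (Fin K) (Fin T) ℝ)
    (Λ : EuclideanSpace ℝ (Fin K) → Set (EuclideanSpace ℝ (Fin T)))
    (hΛ : ∀ v, Λ v = {x | ∀ j, (∑ t, A j t * x t) ≤ v j})
    (B : Set (EuclideanSpace ℝ (Fin K)))
    (hBconv : Convex ℝ B) (hBcpt : IsCompact B)
    (hne : ∀ v ∈ B, (Λ v).Nonempty)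
    (hbdd : ∀ v ∈ B, Bornology.IsBounded (Λ v))
    (C₀ : ℝ) (hC₀ : 0 < C₀)
    (hlip : ∀ v ∈ B, ∀ v' ∈ B, hausdorffDist (Λ v) (Λ v') ≤ C₀ * ‖v - v'‖)
    (b : ℝ → EuclideanSpace ℝ (Fin K))
    (hbmeas : Measurable b) (hbB : ∀ θ ∈ Icc (0:ℝ) 1, b θ ∈ B)
    (S : Set ℝ) (hS : S ⊆ Icc (0:ℝ) 1) (hSmeas : MeasurableSet S)
    (μ : ℝ) (hμ : (volume S).toReal = μ) (hμpos : 0 < μ)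
    (ε : ℝ) (hε : ∀ θ ∈ S, ∀ θ' ∈ S, ‖b θ - b θ'‖ ≤ ε)
    (XS : Set (EuclideanSpace ℝ (Fin T)))
    (hXS : XS = {x | ∀ j, (∑ t, A j t * x t) ≤ (∫ θ in S, b θ) j}) :
    μ⁻¹ • XS = Λ (μ⁻¹ • ∫ θ in S, b θ) ∧
    ∀ θ' ∈ S, hausdorffDist (Λ (b θ')) (μ⁻¹ • XS) ≤ C₀ * ε := by
  have hμne : μ ≠ 0 := ne_of_gt hμpos
  have hSfin : volume S < ⊤ := by
    calc volume S ≤ volume (Icc (0:ℝ) 1) := measure_mono hS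
    _ < ⊤ := by simp [Real.volume_Icc]
  -- Part 1
  have part1 : μ⁻¹ • XS = Λ (μ⁻¹ • ∫ θ in S, b θ) := by
    ext x
    rw [Set.mem_smul_set_iff_inv_smul_mem₀ (inv_ne_zero hμne), inv_inv, hXS, hΛ]
    simp only [Set.mem_setOf_eq, PiLp.smul_apply, smul_eq_mul]
    constructor
    · intro h j
      have := h j
      have : μ * ∑ t, A j t * x t ≤ (∫ θ in S, b θ) j := by
        calc μ * ∑ t, A j t * x t = ∑ t, A j t * (μ * x t) := by
              rw [Finset.mul_sum]; exact Finset.sum_congr rfl fun t _ => by ring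
        _ ≤ _ := this
      calc ∑ t, A j t * x t = μ⁻¹ * (μ * ∑ t, A j t * x t) := by
            field_simp
      _ ≤ μ⁻¹ * (∫ θ in S, b θ) j := by
            exact mul_le_mul_of_nonneg_left this (le_of_lt (inv_pos.mpr hμpos))
    · intro h j
      have := h j
      have h2 : μ * ∑ t, A j t * x t ≤ (∫ θ in S, b θ) j := by
        have := mul_le_mul_of_nonneg_left this (le_of_lt hμpos)
        calc μ * ∑ t, A j t * x t ≤ μ * (μ⁻¹ * (∫ θ in S, b θ) j) := this
        _ = (∫ θ in S, b θ) j := by field_simp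
      calc ∑ t, A j t * (μ * x t) = μ * ∑ t, A j t * x t := by
            rw [Finset.mul_sum]; exact Finset.sum_congr rfl fun t _ => by ring
      _ ≤ _ := h2
  refine ⟨part1, ?_⟩
  -- integrability
  obtain ⟨M, hM⟩ := hBcpt.isBounded.exists_norm_le
  have hint : IntegrableOn b S := by
    refine Integrable.mono' (g := fun _ => M) ?_ (hbmeas.aestronglyMeasurable.restrict) ?_
    · exact integrableOn_const hSfin.ne
    · filter_upwards [ae_restrict_mem hSmeas] with θ hθ
      exact hM _ (hbB θ (hS hθ))
  have havgB : μ⁻¹ • (∫ θ in S, b θ) ∈ B := by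
    have h0 : volume S ≠ 0 := by
      intro h; rw [h] at hμ; simp at hμ; exact hμne hμ.symm
    have := hBconv.set_average_mem hBcpt.isClosed h0 hSfin.ne
      (by filter_upwards [ae_restrict_mem hSmeas] with θ hθ; exact hbB θ (hS hθ)) hint
    rwa [setAverage_eq, measureReal_def, hμ] at this
  have hε0 : 0 ≤ ε := by
    obtain ⟨θ₀, hθ₀⟩ : S.Nonempty := by
      by_contra h
      rw [not_nonempty_iff_eq_empty] at h
      rw [h] at hμ; simp at hμ; exact hμne hμ.symm
    exact le_trans (norm_nonneg _) (hε θ₀ hθ₀ θ₀ hθ₀)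
  intro θ' hθ'
  rw [part1]
  have hdist : ‖b θ' - μ⁻¹ • (∫ θ in S, b θ)‖ ≤ ε := by
    have hconst : ∫ _ in S, b θ' = μ • b θ' := by
      rw [setIntegral_const, measureReal_def, hμ]
    have hsub : b θ' - μ⁻¹ • (∫ θ in S, b θ) = μ⁻¹ • (∫ θ in S, (b θ' - b θ)) := by
      rw [integral_sub (integrableOn_const (C := b θ') hSfin.ne) hint, hconst,
        smul_sub, smul_smul, inv_mul_cancel₀ hμne, one_smul]
    rw [hsub, norm_smul, norm_inv, Real.norm_eq_abs, abs_of_pos hμpos]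
    have hnorm : ‖∫ θ in S, (b θ' - b θ)‖ ≤ ε * (volume S).toReal := by
      apply norm_setIntegral_le_of_norm_le_const hSfin
        (fun θ hθ => hε θ' hθ' θ hθ)
    rw [hμ] at hnorm
    calc μ⁻¹ * ‖∫ θ in S, (b θ' - b θ)‖ ≤ μ⁻¹ * (ε * μ) :=
          mul_le_mul_of_nonneg_left hnorm (le_of_lt (inv_pos.mpr hμpos))
    _ = ε := by field_simp
  calc hausdorffDist (Λ (b θ')) (Λ (μ⁻¹ • ∫ θ in S, b θ))
      ≤ C₀ * ‖b θ' - μ⁻¹ • ∫ θ in S, b θ‖ := hlip _ (hbB θ' (hS hθ')) _ havgB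
  _ ≤ C₀ * ε := mul_le_mul_of_nonneg_left hdist (le_of_lt hC₀)
end
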